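/- arXiv:2508.18808 — 2 statements merged into one kernel-verified Lean document; each statement's English description precedes it below -/
import Mathlib

section
/- The function S is conformally covariant of scaling dimension −1: if ψ ∈ Möb(ℝ^d) is a Möbius transformation, then S(ψ(A)) = S(A)·∏_{a∈A} |det Dψ(a)|^{1/d} for every finite set A ⊆ ℝ^d ∖ ψ^{−1}(∞) with |A| ≥ 2. -/
open MeasureTheory ENNReal Filter
open scoped Classical
namespace LRP
abbrev V (d : ℕ) := Fin d → ℤ
end LRP

namespace LRP

/-! ## Euclidean space and the functional `S` -/

abbrev E (d : ℕ) := EuclideanSpace ℝ (Fin d)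

/-- The embedding of `ℤ^d` into Euclidean space. -/
noncomputable def toE {d : ℕ} (x : V d) : E d := WithLp.toLp 2 (fun i => (x i : ℝ))

/-- Fuelled recursion computing the functional `S`: for a two-point set
`S({x,y}) = ‖x-y‖₂²`, and for `|A| ≥ 3`,
`S(A) = min √(S(A₁∪A₂) S(A₂∪A₃) S(A₃∪A₁))`, the minimum being over partitions of `A`
into three nonempty sets. -/
noncomputable def SAux (d : ℕ) : ℕ → Finset (E d) → ℝ
  | 0, _ => 1
  | n + 1, A =>
    if A.card ≤ 2 then sSup {t : ℝ | ∃ x ∈ A, ∃ y ∈ A, t = dist x y ^ 2}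
    else sInf {t : ℝ | ∃ B : Finset (E d) × Finset (E d) × Finset (E d),
      (B.1.Nonempty ∧ B.2.1.Nonempty ∧ B.2.2.Nonempty ∧
        Disjoint B.1 B.2.1 ∧ Disjoint B.1 B.2.2 ∧ Disjoint B.2.1 B.2.2 ∧
        B.1 ∪ B.2.1 ∪ B.2.2 = A) ∧
      t = Real.sqrt (SAux d n (B.1 ∪ B.2.1) * SAux d n (B.2.1 ∪ B.2.2) *
        SAux d n (B.2.2 ∪ B.1))}

/-- The functional `S` on finite subsets of `ℝ^d` with at least two elements. -/
noncomputable def Sfun {d : ℕ} (A : Finset (E d)) : ℝ := SAux d A.card A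

end LRP

namespace LRP

/-! ## Möbius transformations of `ℝ^d ∪ {∞}` -/

/-- Inversion in the unit sphere. -/
noncomputable def invPt {d : ℕ} (x : E d) : E d := (‖x‖ ^ 2)⁻¹ • x

theorem invPt_ne_zero {d : ℕ} {x : E d} (hx : x ≠ 0) : invPt x ≠ 0 := by
  have h : ‖x‖ ≠ 0 := norm_ne_zero_iff.mpr hx
  exact smul_ne_zero (inv_ne_zero (pow_ne_zero 2 h)) hx

theorem invPt_invPt {d : ℕ} {x : E d} (hx : x ≠ 0) : invPt (invPt x) = x := by
  have h : ‖x‖ ≠ 0 := norm_ne_zero_iff.mpr hx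
  simp only [invPt, norm_smul, norm_inv, norm_pow, norm_norm, smul_smul]
  have h1 : (((‖x‖ ^ 2)⁻¹ * ‖x‖) ^ 2)⁻¹ * (‖x‖ ^ 2)⁻¹ = 1 := by
    field_simp
  rw [h1, one_smul]

/-- Inversion in the unit sphere, as a map of `ℝ^d ∪ {∞}` (where `∞ = none`). -/
noncomputable def inv0 (d : ℕ) : Option (E d) → Option (E d)
  | none => some 0
  | some x => if x = 0 then none else some (invPt x)

theorem inv0_invol (d : ℕ) : Function.Involutive (inv0 d) := by
  intro z
  match z with
  | none => simp [inv0]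
  | some x =>
    by_cases hx : x = 0
    · simp [inv0, hx]
    · simp only [inv0, if_neg hx]
      rw [if_neg (invPt_ne_zero hx), invPt_invPt hx]

/-- Inversion in the unit sphere as a permutation of `ℝ^d ∪ {∞}`. -/
noncomputable def inversionE (d : ℕ) : Equiv.Perm (Option (E d)) :=
  Function.Involutive.toPerm _ (inv0_invol d)

/-- The Möbius group of `ℝ^d`: the group of transformations of `ℝ^d ∪ {∞}` generated by
(the extensions of) Euclidean isometries, dilations, and the inversion in the unit
sphere. -/
noncomputable def Mob (d : ℕ) : Subgroup (Equiv.Perm (Option (E d))) :=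
  Subgroup.closure
    ({inversionE d} ∪ {ψ | ∃ f : E d ≃ E d,
      ((∀ x y : E d, dist (f x) (f y) = dist x y) ∨
        (∃ c : ℝ, 0 < c ∧ ∀ x : E d, f x = c • x)) ∧
      ψ = f.optionCongr})

/-- The finite part of a transformation of `ℝ^d ∪ {∞}` (with junk value `0` at the
preimage of `∞`). -/
noncomputable def mobFun {d : ℕ} (ψ : Equiv.Perm (Option (E d))) (x : E d) : E d :=
  (ψ (some x)).getD 0

/-- The Jacobian determinant `det Dψ(x)`. -/
noncomputable def jacDet {d : ℕ} (ψ : Equiv.Perm (Option (E d))) (x : E d) : ℝ :=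
  LinearMap.det ((fderiv ℝ (mobFun ψ) x).toLinearMap)

/-- The `ℓ^∞` norm on `ℝ^d`. -/
noncomputable def linf {d : ℕ} (y : E d) : ℝ := ⨆ i, |y i|

end LRP

namespace LRP


/-! ## Auxiliary development -/


/-- |det| of a linear isometry equivalence is 1. -/
theorem isoDet {d : ℕ} (O : E d ≃ₗᵢ[ℝ] E d) :
    |LinearMap.det (O.toLinearEquiv : E d →ₗ[ℝ] E d)| = 1 := by
  have h := Measure.addHaar_image_linearMap (volume : Measure (E d))
      (O.toLinearEquiv : E d →ₗ[ℝ] E d) (Metric.ball 0 1)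
  have himg : (O.toLinearEquiv : E d →ₗ[ℝ] E d) '' Metric.ball 0 1 = Metric.ball 0 1 := by
    have := O.toIsometryEquiv.image_ball (0 : E d) 1
    simpa using this
  rw [himg] at h
  have hpos : 0 < (volume : Measure (E d)) (Metric.ball 0 1) :=
    Metric.measure_ball_pos _ _ one_pos
  have hlt : (volume : Measure (E d)) (Metric.ball 0 1) < ⊤ :=
    measure_ball_lt_top
  have : ENNReal.ofReal |LinearMap.det (O.toLinearEquiv : E d →ₗ[ℝ] E d)| = 1 := by
    have h2 : ENNReal.ofReal |LinearMap.det (O.toLinearEquiv : E d →ₗ[ℝ] E d)| *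
        (volume : Measure (E d)) (Metric.ball 0 1) = (volume : Measure (E d)) (Metric.ball 0 1) :=
      h.symm
    rw [mul_comm] at h2
    exact (ENNReal.mul_eq_left (ne_of_gt hpos) (ne_of_lt hlt)).mp h2
  have := ENNReal.ofReal_eq_one.mp this
  linarith [abs_nonneg (LinearMap.det (O.toLinearEquiv : E d →ₗ[ℝ] E d))]

/-- Similarity transformations of Euclidean space: `x ↦ c • O x + v`. -/
structure Simil (d : ℕ) where
  c : ℝ
  hc : 0 < c
  O : E d ≃ₗᵢ[ℝ] E d
  v : E d

namespace Simil
variable {d : ℕ}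

noncomputable def fn (s : Simil d) (x : E d) : E d := s.c • s.O x + s.v

theorem dist_fn (s : Simil d) (x y : E d) : dist (s.fn x) (s.fn y) = s.c * dist x y := by
  simp only [fn, dist_eq_norm]
  rw [show s.c • s.O x + s.v - (s.c • s.O y + s.v) = s.c • (s.O x - s.O y) by
    rw [smul_sub]; abel]
  rw [norm_smul, ← map_sub, s.O.norm_map, Real.norm_eq_abs, abs_of_pos s.hc]

noncomputable def equiv (s : Simil d) : E d ≃ E d where
  toFun := s.fn
  invFun := fun y => s.O.symm (s.c⁻¹ • (y - s.v))
  left_inv := by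
    intro x
    simp [fn, smul_smul, inv_mul_cancel₀ (ne_of_gt s.hc)]
  right_inv := by
    intro y
    simp [fn, smul_smul, mul_inv_cancel₀ (ne_of_gt s.hc)]

@[simp] theorem equiv_apply (s : Simil d) (x : E d) : s.equiv x = s.fn x := rfl

noncomputable def comp (s t : Simil d) : Simil d :=
  ⟨s.c * t.c, mul_pos s.hc t.hc, t.O.trans s.O, s.c • s.O t.v + s.v⟩

theorem comp_fn (s t : Simil d) (x : E d) : (s.comp t).fn x = s.fn (t.fn x) := by
  simp only [comp, fn, LinearIsometryEquiv.trans_apply, map_add,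
    LinearIsometryEquiv.map_smul, smul_smul]
  module

noncomputable def inv (s : Simil d) : Simil d :=
  ⟨s.c⁻¹, inv_pos.mpr s.hc, s.O.symm, -(s.c⁻¹ • s.O.symm s.v)⟩

theorem inv_fn (s : Simil d) (x : E d) : s.inv.fn (s.fn x) = x := by
  simp only [inv, fn, map_add, LinearIsometryEquiv.map_smul,
    LinearIsometryEquiv.symm_apply_apply, smul_smul, inv_mul_cancel₀ (ne_of_gt s.hc), one_smul,
    smul_add]
  module

theorem fn_inv_fn (s : Simil d) (x : E d) : s.fn (s.inv.fn x) = x := by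
  simp only [inv, fn, map_add, LinearIsometryEquiv.map_smul, map_neg,
    LinearIsometryEquiv.apply_symm_apply, smul_smul, mul_inv_cancel₀ (ne_of_gt s.hc), one_smul,
    smul_neg, smul_add]
  module

theorem inv_equiv (s : Simil d) : s.inv.equiv = s.equiv.symm := by
  apply Equiv.ext
  intro x
  apply s.equiv.injective
  rw [Equiv.apply_symm_apply]
  exact s.fn_inv_fn x

noncomputable def one : Simil d := ⟨1, one_pos, LinearIsometryEquiv.refl ℝ (E d), 0⟩

theorem one_fn (x : E d) : (one (d := d)).fn x = x := by simp [one, fn]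

end Simil

open scoped RealInnerProductSpace

section Perm
variable {d : ℕ}

/-- A similarity as a permutation of `ℝ^d ∪ {∞}`. -/
noncomputable def sOpt (s : Simil d) : Equiv.Perm (Option (E d)) := s.equiv.optionCongr

@[simp] theorem sOpt_some (s : Simil d) (x : E d) : sOpt s (some x) = some (s.fn x) := rfl

@[simp] theorem sOpt_none (s : Simil d) : sOpt s none = none := rfl

@[simp] theorem inversionE_apply (z : Option (E d)) : inversionE d z = inv0 d z := rfl

theorem sOpt_mul (s t : Simil d) : sOpt s * sOpt t = sOpt (s.comp t) := by
  apply Equiv.ext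
  intro z
  cases z with
  | none => rfl
  | some x => simp [Equiv.Perm.mul_apply, Simil.comp_fn]

theorem sOpt_one : sOpt (Simil.one : Simil d) = 1 := by
  apply Equiv.ext
  intro z
  cases z with
  | none => rfl
  | some x => simp [Simil.one_fn]

theorem J_mul_J : inversionE d * inversionE d = 1 := by
  apply Equiv.ext
  intro z
  simpa [Equiv.Perm.mul_apply] using inv0_invol d z

theorem invPt_zero : invPt (0 : E d) = 0 := by simp [invPt]

theorem invPt_smul {c : ℝ} (hc : c ≠ 0) (m : E d) : invPt (c • m) = c⁻¹ • invPt m := by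
  rcases eq_or_ne m 0 with rfl | hm
  · simp [invPt]
  · have hn : ‖m‖ ≠ 0 := norm_ne_zero_iff.mpr hm
    simp only [invPt, norm_smul, smul_smul, Real.norm_eq_abs]
    congr 1
    rw [mul_pow, sq_abs]
    field_simp

theorem invPt_neg (m : E d) : invPt (-m) = - invPt m := by
  simp [invPt]

theorem norm_invPt {x : E d} (hx : x ≠ 0) : ‖invPt x‖ = ‖x‖⁻¹ := by
  have hn : ‖x‖ ≠ 0 := norm_ne_zero_iff.mpr hx
  rw [invPt, norm_smul, norm_inv, norm_pow, norm_norm]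
  field_simp

theorem invPt_linear_isometry (O : E d ≃ₗᵢ[ℝ] E d) (u : E d) : invPt (O u) = O (invPt u) := by
  simp [invPt, O.norm_map, LinearIsometryEquiv.map_smul]

/-- Translation as a similarity. -/
noncomputable def tau (a : E d) : Simil d := ⟨1, one_pos, LinearIsometryEquiv.refl ℝ (E d), a⟩

theorem tau_fn (a x : E d) : (tau a).fn x = x + a := by simp [tau, Simil.fn]

end Perm

section Reflect
variable {d : ℕ}

/-- The reflection across the hyperplane orthogonal to `a`. -/
noncomputable def refl0 (a : E d) : E d ≃ₗᵢ[ℝ] E d := Submodule.reflection ((ℝ ∙ a)ᗮ)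

theorem refl0_apply {a : E d} (ha : a ≠ 0) (y : E d) :
    refl0 a y = y - ((2 * ⟪a, y⟫) / ‖a‖ ^ 2) • a := by
  rw [refl0, Submodule.reflection_apply, Submodule.starProjection_orthogonal_val,
    Submodule.starProjection_singleton]
  match_scalars <;> simp <;> ring

/-- The "A'" similarity appearing in `J ∘ τ_a ∘ J = A' ∘ J ∘ B'`. -/
noncomputable def refA (a : E d) (ha : a ≠ 0) : Simil d :=
  ⟨(‖a‖ ^ 2)⁻¹, by have := norm_pos_iff.mpr ha; positivity, refl0 a, (‖a‖ ^ 2)⁻¹ • a⟩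

end Reflect

section Core
variable {d : ℕ}

theorem refA_fn {a : E d} (ha : a ≠ 0) (y : E d) :
    (refA a ha).fn y = (‖a‖ ^ 2)⁻¹ • (refl0 a y) + (‖a‖ ^ 2)⁻¹ • a := rfl

theorem refl0_self {a : E d} (ha : a ≠ 0) : refl0 a a = -a := by
  have hA : ‖a‖ ≠ 0 := norm_ne_zero_iff.mpr ha
  rw [refl0_apply ha, real_inner_self_eq_norm_sq]
  match_scalars
  field_simp
  norm_num

theorem refA_fn_a {a : E d} (ha : a ≠ 0) : (refA a ha).fn a = 0 := by
  rw [refA_fn, refl0_self ha]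
  module

/-- The core algebraic identity behind `J ∘ τ_a ∘ J = A' ∘ J ∘ B'`. -/
theorem core_identity {a x : E d} (ha : a ≠ 0) (hx : x ≠ 0) (hxa : invPt x + a ≠ 0) :
    invPt (invPt x + a) = (refA a ha).fn (invPt (x + invPt a)) := by
  have hX : (0:ℝ) < ‖x‖ ^ 2 := by have := norm_pos_iff.mpr hx; positivity
  have hA2 : (0:ℝ) < ‖a‖ ^ 2 := by have := norm_pos_iff.mpr ha; positivity
  set X : ℝ := ‖x‖ ^ 2 with hXdef
  set A2 : ℝ := ‖a‖ ^ 2 with hA2def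
  set P : ℝ := ⟪x, a⟫ with hPdef
  set D : ℝ := 1 + 2 * P + A2 * X with hDdef
  set m : E d := x + X • a with hmdef
  set m' : E d := A2 • x + a with hm'def
  have h1 : invPt x + a = X⁻¹ • m := by
    rw [hmdef, smul_add, smul_smul, inv_mul_cancel₀ (ne_of_gt hX), one_smul, invPt]
  have hm0 : m ≠ 0 := by
    intro h
    apply hxa
    rw [h1, h, smul_zero]
  have h2 : ‖m‖ ^ 2 = X * D := by
    rw [hmdef, norm_add_sq_real, real_inner_smul_right, norm_smul, Real.norm_eq_abs,
      mul_pow, sq_abs, hDdef, hPdef, hXdef, hA2def]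
    ring
  have hD : (0:ℝ) < D := by
    have : (0:ℝ) < ‖m‖ ^ 2 := by have := norm_pos_iff.mpr hm0; positivity
    nlinarith
  have h3 : ‖m'‖ ^ 2 = A2 * D := by
    rw [hm'def, norm_add_sq_real, real_inner_smul_left, norm_smul, Real.norm_eq_abs,
      mul_pow, sq_abs, hDdef, hPdef, hXdef, hA2def]
    ring
  have hm'0 : m' ≠ 0 := by
    intro h
    rw [h, norm_zero] at h3
    nlinarith
  have h4 : x + invPt a = A2⁻¹ • m' := by
    rw [hm'def, smul_add, smul_smul, inv_mul_cancel₀ (ne_of_gt hA2), one_smul, invPt]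
  have hLHS : invPt (invPt x + a) = D⁻¹ • m := by
    rw [h1, invPt_smul (inv_ne_zero (ne_of_gt hX)), inv_inv, invPt, h2, smul_smul]
    congr 1
    field_simp
  have hRHS : invPt (x + invPt a) = D⁻¹ • m' := by
    rw [h4, invPt_smul (inv_ne_zero (ne_of_gt hA2)), inv_inv, invPt, h3, smul_smul]
    congr 1
    field_simp
  rw [hLHS, hRHS, refA_fn, refl0_apply ha]
  have hinner : ⟪a, D⁻¹ • m'⟫ = D⁻¹ * (A2 * P + A2) := by
    rw [real_inner_smul_right, hm'def, inner_add_right, real_inner_smul_right,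
      real_inner_self_eq_norm_sq, ← hA2def, real_inner_comm, ← hPdef]
  rw [hinner, hmdef, hm'def]
  match_scalars
  · field_simp
    rw [hA2def]
  · field_simp
    ring
end Core

section NFsec
variable {d : ℕ}

theorem sOpt_congr (s t : Simil d) (h : ∀ x, s.fn x = t.fn x) : sOpt s = sOpt t := by
  apply Equiv.ext
  intro z
  cases z with
  | none => rfl
  | some x => simp [h]

theorem J_tau_J {a : E d} (ha : a ≠ 0) :
    inversionE d * sOpt (tau a) * inversionE d =
      sOpt (refA a ha) * inversionE d * sOpt (tau (invPt a)) := by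
  have hia := invPt_ne_zero ha
  apply Equiv.ext
  intro z
  cases z with
  | none =>
    show inversionE d (sOpt (tau a) (inversionE d none)) =
      sOpt (refA a ha) (inversionE d (sOpt (tau (invPt a)) none))
    simp only [inversionE_apply, inv0, sOpt_some, sOpt_none, tau_fn, zero_add]
    rw [if_neg ha]
    show some (invPt a) = some ((refA a ha).fn 0)
    rw [refA_fn, map_zero, smul_zero, zero_add, invPt]
  | some x =>
    show inversionE d (sOpt (tau a) (inversionE d (some x))) =
      sOpt (refA a ha) (inversionE d (sOpt (tau (invPt a)) (some x)))
    rcases eq_or_ne x 0 with rfl | hx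
    · simp only [inversionE_apply, inv0, if_pos rfl, sOpt_none, sOpt_some, tau_fn, zero_add]
      rw [if_neg hia]
      show some 0 = some ((refA a ha).fn (invPt (invPt a)))
      rw [invPt_invPt ha, refA_fn_a ha]
    · simp only [inversionE_apply, inv0, if_neg hx, sOpt_some, tau_fn]
      rcases eq_or_ne (invPt x + a) 0 with h0 | h0
      · have hxb : x + invPt a = 0 := by
          have hxv : x = -invPt a := by
            have h2 : invPt x = -a := by rwa [add_eq_zero_iff_eq_neg] at h0
            rw [← invPt_invPt hx, h2, invPt_neg]
          rw [hxv]
          abel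
        rw [if_pos hxb, if_pos h0]
        rfl
      · have hxb : x + invPt a ≠ 0 := by
          intro h
          apply h0
          have hxv : x = -invPt a := by rwa [add_eq_zero_iff_eq_neg] at h
          rw [hxv, invPt_neg, invPt_invPt ha]
          abel
        rw [if_neg hxb, if_neg h0]
        simp only [sOpt_some]
        exact congrArg some (core_identity ha hx h0)

/-- `J ∘ L ∘ J` for a linear similarity `L` is again a linear similarity. -/
theorem J_lin_J (M N : Simil d) (hv : M.v = 0) (h1 : N.c = M.c⁻¹) (h2 : N.O = M.O)
    (h3 : N.v = 0) :
    inversionE d * sOpt M * inversionE d = sOpt N := by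
  apply Equiv.ext
  intro z
  have hfn : ∀ y : E d, M.fn y = M.c • M.O y := by
    intro y; rw [Simil.fn, hv, add_zero]
  have hNfn : ∀ y : E d, N.fn y = M.c⁻¹ • M.O y := by
    intro y; rw [Simil.fn, h1, h2, h3, add_zero]
  have hfn0 : ∀ y : E d, y ≠ 0 → M.fn y ≠ 0 := by
    intro y hy h
    rw [hfn] at h
    rcases smul_eq_zero.mp h with h' | h'
    · exact absurd h' (ne_of_gt M.hc)
    · exact hy (M.O.map_eq_zero_iff.mp h')
  cases z with
  | none =>
    show inversionE d (sOpt M (inversionE d none)) = _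
    simp only [inversionE_apply, inv0, sOpt_some]
    have h0 : M.fn 0 = 0 := by rw [hfn, map_zero, smul_zero]
    rw [h0, if_pos rfl]
    rfl
  | some x =>
    show inversionE d (sOpt M (inversionE d (some x))) = sOpt N (some x)
    rcases eq_or_ne x 0 with rfl | hx
    · simp only [inversionE_apply, inv0, if_pos rfl, sOpt_none, sOpt_some]
      show some 0 = some (N.fn 0)
      rw [hNfn, map_zero, smul_zero]
    · simp only [inversionE_apply, inv0, if_neg hx, sOpt_some]
      rw [if_neg (hfn0 _ (invPt_ne_zero hx))]
      show some (invPt (M.fn (invPt x))) = some (N.fn x)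
      congr 1
      rw [hfn, hNfn, invPt_smul (ne_of_gt M.hc), invPt_linear_isometry, invPt_invPt hx]

theorem J_conj_mul (α β : Equiv.Perm (Option (E d))) :
    (inversionE d * α * inversionE d) * (inversionE d * β * inversionE d)
      = inversionE d * (α * β) * inversionE d := by
  have h := J_mul_J (d := d)
  calc (inversionE d * α * inversionE d) * (inversionE d * β * inversionE d)
      = inversionE d * (α * ((inversionE d * inversionE d) * (β * inversionE d))) := by
        simp only [mul_assoc]
    _ = inversionE d * (α * β) * inversionE d := by
        rw [h, one_mul]
        simp only [mul_assoc]

/-- Normal form for Möbius transformations. -/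
def IsNF (ψ : Equiv.Perm (Option (E d))) : Prop :=
  (∃ s : Simil d, ψ = sOpt s) ∨
    (∃ s t : Simil d, ψ = sOpt s * inversionE d * sOpt t)

theorem J_sim_J (M : Simil d) : IsNF (inversionE d * sOpt M * inversionE d) := by
  rcases eq_or_ne M.v 0 with hv | hv
  · exact Or.inl ⟨_, J_lin_J M ⟨M.c⁻¹, inv_pos.mpr M.hc, M.O, 0⟩ hv rfl rfl rfl⟩
  · right
    have hdec : sOpt M = sOpt (tau M.v) * sOpt ⟨M.c, M.hc, M.O, 0⟩ := by
      rw [sOpt_mul]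
      refine sOpt_congr _ _ fun x => ?_
      rw [Simil.comp_fn, tau_fn]
      simp [Simil.fn]
    refine ⟨refA M.v hv, (tau (invPt M.v)).comp ⟨M.c⁻¹, inv_pos.mpr M.hc, M.O, 0⟩, ?_⟩
    rw [hdec, show inversionE d * (sOpt (tau M.v) * sOpt ⟨M.c, M.hc, M.O, 0⟩) * inversionE d
        = (inversionE d * sOpt (tau M.v) * inversionE d) *
          (inversionE d * sOpt ⟨M.c, M.hc, M.O, 0⟩ * inversionE d) by
      rw [J_conj_mul]]
    rw [J_tau_J hv, J_lin_J ⟨M.c, M.hc, M.O, 0⟩ ⟨M.c⁻¹, inv_pos.mpr M.hc, M.O, 0⟩ rfl rfl rfl rfl,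
      mul_assoc, mul_assoc, sOpt_mul]
    simp only [mul_assoc]

end NFsec

section NFsec2
variable {d : ℕ}

theorem sOpt_inv (s : Simil d) : (sOpt s)⁻¹ = sOpt s.inv := by
  show (s.equiv.optionCongr).symm = sOpt s.inv
  rw [← Equiv.optionCongr_symm, sOpt, Simil.inv_equiv]

theorem J_inv : (inversionE d)⁻¹ = inversionE d :=
  inv_eq_of_mul_eq_one_right J_mul_J

theorem mob_isNF {ψ : Equiv.Perm (Option (E d))} (hψ : ψ ∈ Mob d) : IsNF ψ := by
  rw [Mob] at hψ
  induction hψ using Subgroup.closure_induction with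
  | mem g hg =>
    rcases hg with hg | ⟨f, hf, rfl⟩
    · rcases hg with rfl
      exact Or.inr ⟨Simil.one, Simil.one, by rw [sOpt_one, one_mul, mul_one]⟩
    · rcases hf with hiso | ⟨c, hc, hdil⟩
      · set g : E d ≃ᵢ E d := ⟨f, Isometry.of_dist_eq hiso⟩ with hgdef
        refine Or.inl ⟨⟨1, one_pos, g.toRealLinearIsometryEquiv, f 0⟩, ?_⟩
        have he : (⟨1, one_pos, g.toRealLinearIsometryEquiv, f 0⟩ : Simil d).equiv = f := by
          apply Equiv.ext; intro x
          show (1:ℝ) • (g.toRealLinearIsometryEquiv x) + f 0 = f x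
          rw [one_smul, IsometryEquiv.toRealLinearIsometryEquiv_apply]
          show f x - f 0 + f 0 = f x
          abel
        rw [sOpt, he]
      · refine Or.inl ⟨⟨c, hc, LinearIsometryEquiv.refl ℝ (E d), 0⟩, ?_⟩
        have he : (⟨c, hc, LinearIsometryEquiv.refl ℝ (E d), 0⟩ : Simil d).equiv = f := by
          apply Equiv.ext; intro x
          show c • x + 0 = f x
          rw [add_zero, hdil x]
        rw [sOpt, he]
  | one => exact Or.inl ⟨Simil.one, sOpt_one.symm⟩
  | mul x y hxm hym hx hy =>
    rcases hx with ⟨s, rfl⟩ | ⟨s, t, rfl⟩ <;> rcases hy with ⟨u, rfl⟩ | ⟨u, w, rfl⟩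
    · exact Or.inl ⟨s.comp u, sOpt_mul s u⟩
    · refine Or.inr ⟨s.comp u, w, ?_⟩
      rw [← sOpt_mul]
      simp only [mul_assoc]
    · refine Or.inr ⟨s, t.comp u, ?_⟩
      rw [← sOpt_mul]
      simp only [mul_assoc]
    · have key : sOpt s * inversionE d * sOpt t * (sOpt u * inversionE d * sOpt w)
          = sOpt s * (inversionE d * sOpt (t.comp u) * inversionE d) * sOpt w := by
        rw [← sOpt_mul]
        simp only [mul_assoc]
      rw [key]
      rcases J_sim_J (t.comp u) with ⟨M, hM⟩ | ⟨Aa, Bb, hM⟩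
      · exact Or.inl ⟨(s.comp M).comp w, by rw [hM, sOpt_mul, sOpt_mul]⟩
      · refine Or.inr ⟨s.comp Aa, Bb.comp w, ?_⟩
        rw [hM, ← sOpt_mul, ← sOpt_mul]
        simp only [mul_assoc]
  | inv x hxm hx =>
    rcases hx with ⟨s, rfl⟩ | ⟨s, t, rfl⟩
    · exact Or.inl ⟨s.inv, sOpt_inv s⟩
    · refine Or.inr ⟨t.inv, s.inv, ?_⟩
      rw [mul_inv_rev, mul_inv_rev, J_inv, sOpt_inv, sOpt_inv]
      simp only [mul_assoc]

end NFsec2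

section Analytic
variable {d : ℕ}

theorem mobFun_sOpt (s : Simil d) : mobFun (sOpt s) = s.fn := funext fun _ => rfl

/-- The derivative of a similarity. -/
noncomputable def simDeriv (s : Simil d) : E d →L[ℝ] E d :=
  s.c • (s.O.toContinuousLinearEquiv : E d →L[ℝ] E d)

theorem simil_hasFDerivAt (s : Simil d) (x : E d) : HasFDerivAt s.fn (simDeriv s) x := by
  have h : HasFDerivAt (fun y : E d => s.c • s.O y + s.v) (simDeriv s) x := by
    exact (((s.O.toContinuousLinearEquiv : E d →L[ℝ] E d).hasFDerivAt).const_smul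
      s.c).add_const s.v
  exact h

theorem simil_continuous (s : Simil d) : Continuous s.fn := by
  have : Continuous fun y : E d => s.c • s.O y + s.v :=
    ((s.O.continuous.const_smul s.c).add continuous_const)
  exact this

theorem abs_det_smul_iso (c : ℝ) (hc : 0 ≤ c) (O : E d ≃ₗᵢ[ℝ] E d) :
    |LinearMap.det ((c • (O.toContinuousLinearEquiv : E d →L[ℝ] E d) :
      E d →L[ℝ] E d) : E d →ₗ[ℝ] E d)| = c ^ d := by
  have h1 : ((c • (O.toContinuousLinearEquiv : E d →L[ℝ] E d) :
      E d →L[ℝ] E d) : E d →ₗ[ℝ] E d) = c • ((O.toLinearEquiv : E d →ₗ[ℝ] E d)) := rfl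
  rw [h1, LinearMap.det_smul, finrank_euclideanSpace_fin, abs_mul, abs_pow, isoDet,
    mul_one, abs_of_nonneg hc]

theorem jacDet_sOpt (s : Simil d) (x : E d) : |jacDet (sOpt s) x| = s.c ^ d := by
  rw [jacDet, mobFun_sOpt, (simil_hasFDerivAt s x).fderiv]
  exact abs_det_smul_iso s.c (le_of_lt s.hc) s.O

/-- The derivative of the inversion. -/
noncomputable def invDeriv (x : E d) : E d →L[ℝ] E d :=
  (‖x‖ ^ 2)⁻¹ • ((refl0 x).toContinuousLinearEquiv : E d →L[ℝ] E d)

theorem invPt_hasFDerivAt {x : E d} (hx : x ≠ 0) : HasFDerivAt invPt (invDeriv x) x := by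
  have hns : ‖x‖ ^ 2 ≠ 0 := by
    have := norm_pos_iff.mpr hx; positivity
  have h1 : HasFDerivAt (fun y : E d => ‖y‖ ^ 2) (2 • (innerSL ℝ x)) x :=
    (hasStrictFDerivAt_norm_sq x).hasFDerivAt
  have h2 := ((hasDerivAt_inv hns).comp_hasFDerivAt x h1).smul (hasFDerivAt_id x)
  have h3 : HasFDerivAt invPt
      ((‖x‖ ^ 2)⁻¹ • ContinuousLinearMap.id ℝ (E d) +
        (-((‖x‖ ^ 2) ^ 2)⁻¹ • (2 • (innerSL ℝ x))).smulRight x) x := by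
    exact h2
  have heq : ((‖x‖ ^ 2)⁻¹ • ContinuousLinearMap.id ℝ (E d) +
      (-((‖x‖ ^ 2) ^ 2)⁻¹ • (2 • (innerSL ℝ x))).smulRight x) = invDeriv x := by
    refine ContinuousLinearMap.ext fun w => ?_
    have hco : (((refl0 x).toContinuousLinearEquiv : E d →L[ℝ] E d)) w = refl0 x w := rfl
    simp only [invDeriv, ContinuousLinearMap.add_apply, ContinuousLinearMap.smul_apply,
      ContinuousLinearMap.id_apply, ContinuousLinearMap.smulRight_apply, hco,
      innerSL_apply_apply, nsmul_eq_mul, Nat.cast_ofNat]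
    rw [refl0_apply hx w]
    match_scalars
    · field_simp
    · field_simp
      rw [smul_eq_mul, ← mul_assoc, mul_neg,
        mul_one_div_cancel (pow_ne_zero 4 (norm_ne_zero_iff.mpr hx))]
      ring
  rwa [heq] at h3

theorem dist_invPt {u v : E d} (hu : u ≠ 0) (hv : v ≠ 0) :
    dist (invPt u) (invPt v) ^ 2 = dist u v ^ 2 / (‖u‖ ^ 2 * ‖v‖ ^ 2) := by
  have hnu : ‖u‖ ≠ 0 := norm_ne_zero_iff.mpr hu
  have hnv : ‖v‖ ≠ 0 := norm_ne_zero_iff.mpr hv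
  have hinner : ⟪invPt u, invPt v⟫ = (‖u‖ ^ 2)⁻¹ * ((‖v‖ ^ 2)⁻¹ * ⟪u, v⟫) := by
    rw [invPt, invPt, real_inner_smul_left, real_inner_smul_right]
  rw [dist_eq_norm, dist_eq_norm, norm_sub_sq_real, norm_sub_sq_real, hinner,
    norm_invPt hu, norm_invPt hv]
  field_simp
  ring

end Analytic

section Conformal
variable {d : ℕ}

theorem nf2_apply (s t : Simil d) (x : E d) :
    (sOpt s * inversionE d * sOpt t) (some x) = sOpt s (inv0 d (some (t.fn x))) := rfl

theorem nf2_pole_iff (s t : Simil d) (x : E d) :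
    (sOpt s * inversionE d * sOpt t) (some x) ≠ none ↔ t.fn x ≠ 0 := by
  rw [nf2_apply]
  constructor
  · intro h h0
    apply h
    rw [h0]
    simp [inv0]
  · intro h0
    rw [show inv0 d (some (t.fn x)) = some (invPt (t.fn x)) from by simp [inv0, h0]]
    simp

theorem nf2_mobFun (s t : Simil d) {x : E d} (h : t.fn x ≠ 0) :
    mobFun (sOpt s * inversionE d * sOpt t) x = s.fn (invPt (t.fn x)) := by
  rw [mobFun, nf2_apply]
  simp [inv0, h]

theorem conformal {ψ : Equiv.Perm (Option (E d))} (hψ : ψ ∈ Mob d) :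
    ∃ lam : E d → ℝ, ∀ x, ψ (some x) ≠ none →
      (0 < lam x ∧ |jacDet ψ x| = lam x ^ d ∧
        ∀ y, ψ (some y) ≠ none →
          dist (mobFun ψ x) (mobFun ψ y) ^ 2 = lam x * lam y * dist x y ^ 2) := by
  rcases mob_isNF hψ with ⟨s, rfl⟩ | ⟨s, t, rfl⟩
  · refine ⟨fun _ => s.c, fun x _ => ⟨s.hc, jacDet_sOpt s x, fun y _ => ?_⟩⟩
    rw [mobFun_sOpt, Simil.dist_fn]
    ring
  · refine ⟨fun x => s.c * t.c / ‖t.fn x‖ ^ 2, fun x hx => ?_⟩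
    have hx0 : t.fn x ≠ 0 := (nf2_pole_iff s t x).mp hx
    have hnx : (0:ℝ) < ‖t.fn x‖ := norm_pos_iff.mpr hx0
    have hlampos : 0 < s.c * t.c / ‖t.fn x‖ ^ 2 := by
      have h1 := mul_pos s.hc t.hc
      positivity
    refine ⟨hlampos, ?_, ?_⟩
    · have hU : IsOpen {y : E d | t.fn y ≠ 0} :=
        isOpen_ne.preimage (simil_continuous t)
      have h1 := simil_hasFDerivAt t x
      have h2 := invPt_hasFDerivAt hx0
      have h3 := simil_hasFDerivAt s (invPt (t.fn x))
      have hcomp : HasFDerivAt (fun y => s.fn (invPt (t.fn y)))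
          ((simDeriv s).comp ((invDeriv (t.fn x)).comp (simDeriv t))) x :=
        (h3.comp x (h2.comp x h1) : HasFDerivAt (s.fn ∘ (invPt ∘ t.fn)) _ x)
      have hEv : mobFun (sOpt s * inversionE d * sOpt t) =ᶠ[nhds x]
          fun y => s.fn (invPt (t.fn y)) := by
        filter_upwards [hU.mem_nhds hx0] with y hy
        exact nf2_mobFun s t hy
      have hF : HasFDerivAt (mobFun (sOpt s * inversionE d * sOpt t))
          ((simDeriv s).comp ((invDeriv (t.fn x)).comp (simDeriv t))) x :=
        hcomp.congr_of_eventuallyEq hEv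
      rw [jacDet, hF.fderiv]
      have hco : (((simDeriv s).comp ((invDeriv (t.fn x)).comp (simDeriv t)) :
          E d →L[ℝ] E d) : E d →ₗ[ℝ] E d)
          = ((simDeriv s : E d →L[ℝ] E d) : E d →ₗ[ℝ] E d).comp
            (((invDeriv (t.fn x) : E d →L[ℝ] E d) : E d →ₗ[ℝ] E d).comp
              ((simDeriv t : E d →L[ℝ] E d) : E d →ₗ[ℝ] E d)) := rfl
      rw [hco, LinearMap.det_comp, LinearMap.det_comp, abs_mul, abs_mul]
      have e1 : |LinearMap.det ((simDeriv s : E d →L[ℝ] E d) : E d →ₗ[ℝ] E d)| = s.c ^ d :=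
        abs_det_smul_iso s.c s.hc.le s.O
      have e2 : |LinearMap.det ((simDeriv t : E d →L[ℝ] E d) : E d →ₗ[ℝ] E d)| = t.c ^ d :=
        abs_det_smul_iso t.c t.hc.le t.O
      have e3 : |LinearMap.det ((invDeriv (t.fn x) : E d →L[ℝ] E d) : E d →ₗ[ℝ] E d)|
          = ((‖t.fn x‖ ^ 2)⁻¹) ^ d :=
        abs_det_smul_iso _ (by positivity) (refl0 (t.fn x))
      rw [e1, e2, e3, div_pow, mul_pow]
      field_simp
      have hn : (‖t.fn x‖ ^ 2) ^ d ≠ 0 := by positivity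
      rw [one_div_pow, show s.c ^ d * (1 / (‖t.fn x‖ ^ 2) ^ d) * t.c ^ d * (‖t.fn x‖ ^ 2) ^ d
        = s.c ^ d * t.c ^ d * ((‖t.fn x‖ ^ 2) ^ d * (1 / (‖t.fn x‖ ^ 2) ^ d)) by ring,
        mul_one_div_cancel hn, mul_one]
    · intro y hy
      have hy0 : t.fn y ≠ 0 := (nf2_pole_iff s t y).mp hy
      have hny : (0:ℝ) < ‖t.fn y‖ := norm_pos_iff.mpr hy0
      rw [nf2_mobFun s t hx0, nf2_mobFun s t hy0, Simil.dist_fn, mul_pow,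
        dist_invPt hx0 hy0, show dist (t.fn x) (t.fn y) = t.c * dist x y from
          Simil.dist_fn t x y, mul_pow]
      field_simp

end Conformal

section SAuxLemmas
variable {d : ℕ}

theorem SAux_succ (n : ℕ) (A : Finset (E d)) :
    SAux d (n + 1) A =
      if A.card ≤ 2 then sSup {t : ℝ | ∃ x ∈ A, ∃ y ∈ A, t = dist x y ^ 2}
      else sInf {t : ℝ | ∃ B : Finset (E d) × Finset (E d) × Finset (E d),
        (B.1.Nonempty ∧ B.2.1.Nonempty ∧ B.2.2.Nonempty ∧
          Disjoint B.1 B.2.1 ∧ Disjoint B.1 B.2.2 ∧ Disjoint B.2.1 B.2.2 ∧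
          B.1 ∪ B.2.1 ∪ B.2.2 = A) ∧
        t = Real.sqrt (SAux d n (B.1 ∪ B.2.1) * SAux d n (B.2.1 ∪ B.2.2) *
          SAux d n (B.2.2 ∪ B.1))} := rfl

theorem SAux_nonneg (n : ℕ) (A : Finset (E d)) : 0 ≤ SAux d n A := by
  cases n with
  | zero => exact zero_le_one
  | succ n =>
    rw [SAux_succ]
    split_ifs
    · apply Real.sSup_nonneg
      rintro t ⟨x, _, y, _, rfl⟩
      positivity
    · apply Real.sInf_nonneg
      rintro t ⟨B, _, rfl⟩
      exact Real.sqrt_nonneg _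

theorem pair_set_eq {a b : E d} (hab : a ≠ b) :
    {t : ℝ | ∃ x ∈ ({a, b} : Finset (E d)), ∃ y ∈ ({a, b} : Finset (E d)), t = dist x y ^ 2}
      = {0, dist a b ^ 2} := by
  ext t
  constructor
  · rintro ⟨x, hx, y, hy, rfl⟩
    simp only [Finset.mem_insert, Finset.mem_singleton] at hx hy
    simp only [Set.mem_insert_iff, Set.mem_singleton_iff]
    rcases hx with rfl | rfl <;> rcases hy with rfl | rfl
    · exact Or.inl (by simp)
    · exact Or.inr rfl
    · exact Or.inr (by rw [dist_comm])
    · exact Or.inl (by simp)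
  · rintro (rfl | rfl)
    · exact ⟨a, by simp, a, by simp, by simp⟩
    · exact ⟨a, by simp, b, by simp, rfl⟩

theorem sSup_pair_dist (a b : E d) (hab : a ≠ b) :
    sSup ({0, dist a b ^ 2} : Set ℝ) = dist a b ^ 2 := by
  rw [csSup_pair]
  exact sup_eq_right.mpr (by positivity)

theorem SAux_two (n : ℕ) {a b : E d} (hab : a ≠ b) :
    SAux d (n + 1) {a, b} = dist a b ^ 2 := by
  rw [SAux_succ]
  rw [if_pos (by rw [Finset.card_insert_of_notMem (by simpa using hab),
    Finset.card_singleton])]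
  rw [pair_set_eq hab, sSup_pair_dist a b hab]

end SAuxLemmas

section Covariant
open scoped Pointwise
variable {d : ℕ}

theorem SAux_covariant (n : ℕ) :
    ∀ (A : Finset (E d)) (g : E d → E d) (lam : E d → ℝ),
      (∀ a ∈ A, 0 < lam a) → Set.InjOn g ↑A →
      (∀ x ∈ A, ∀ y ∈ A, dist (g x) (g y) ^ 2 = lam x * lam y * dist x y ^ 2) →
      2 ≤ A.card → A.card ≤ n →
      SAux d n (A.image g) = (∏ a ∈ A, lam a) * SAux d n A := by
  induction n with
  | zero => intro A g lam _ _ _ h2 h0; omega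
  | succ n ih =>
    intro A g lam hpos hinj hdist h2 hn
    have hcard : (A.image g).card = A.card := Finset.card_image_of_injOn hinj
    rcases eq_or_lt_of_le h2 with hc2 | hc3
    · obtain ⟨a, b, hab, rfl⟩ := Finset.card_eq_two.mp hc2.symm
      have ha : a ∈ ({a, b} : Finset (E d)) := by simp
      have hb : b ∈ ({a, b} : Finset (E d)) := by simp
      have hgab : g a ≠ g b := fun h => hab (hinj (Finset.mem_coe.mpr ha)
        (Finset.mem_coe.mpr hb) h)
      have himg : ({a, b} : Finset (E d)).image g = {g a, g b} := by
        simp [Finset.image_insert, Finset.image_singleton]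
      rw [himg, SAux_two n hgab, SAux_two n hab, hdist a ha b hb,
        Finset.prod_insert (by simpa using hab), Finset.prod_singleton]
    · have hA3 : ¬ A.card ≤ 2 := by omega
      have hI3 : ¬ (A.image g).card ≤ 2 := by omega
      set Q := ∏ a ∈ A, lam a with hQ
      have hQpos : 0 < Q := Finset.prod_pos hpos
      rw [SAux_succ, SAux_succ, if_neg hA3, if_neg hI3]
      have key : ∀ B1 B2 B3 : Finset (E d), B1.Nonempty → B2.Nonempty → B3.Nonempty →
          Disjoint B1 B2 → Disjoint B1 B3 → Disjoint B2 B3 → B1 ∪ B2 ∪ B3 = A →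
          Real.sqrt (SAux d n ((B1 ∪ B2).image g) * SAux d n ((B2 ∪ B3).image g) *
            SAux d n ((B3 ∪ B1).image g))
            = Q * Real.sqrt (SAux d n (B1 ∪ B2) * SAux d n (B2 ∪ B3) *
                SAux d n (B3 ∪ B1)) := by
        intro B1 B2 B3 hn1 hn2 hn3 d12 d13 d23 hu
        have hd123 : Disjoint (B1 ∪ B2) B3 := Finset.disjoint_union_left.mpr ⟨d13, d23⟩
        have hcA : A.card = B1.card + B2.card + B3.card := by
          rw [← hu, Finset.card_union_of_disjoint hd123, Finset.card_union_of_disjoint d12]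
        have hsub : ∀ B : Finset (E d), B ⊆ A →
            (∀ a ∈ B, 0 < lam a) ∧ Set.InjOn g ↑B ∧
            (∀ x ∈ B, ∀ y ∈ B, dist (g x) (g y) ^ 2 = lam x * lam y * dist x y ^ 2) := by
          intro B hB
          exact ⟨fun a haB => hpos a (hB haB),
            hinj.mono (Finset.coe_subset.mpr hB),
            fun x hx y hy => hdist x (hB hx) y (hB hy)⟩
        have hsub12 : B1 ∪ B2 ⊆ A := by
          rw [← hu]; intro x hx; simp only [Finset.mem_union] at hx ⊢; tauto
        have hsub23 : B2 ∪ B3 ⊆ A := by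
          rw [← hu]; intro x hx; simp only [Finset.mem_union] at hx ⊢; tauto
        have hsub31 : B3 ∪ B1 ⊆ A := by
          rw [← hu]; intro x hx; simp only [Finset.mem_union] at hx ⊢; tauto
        have hc12 : (B1 ∪ B2).card = B1.card + B2.card := Finset.card_union_of_disjoint d12
        have hc23 : (B2 ∪ B3).card = B2.card + B3.card := Finset.card_union_of_disjoint d23
        have hc31 : (B3 ∪ B1).card = B3.card + B1.card :=
          Finset.card_union_of_disjoint d13.symm
        obtain ⟨o1, o2, o3⟩ : 1 ≤ B1.card ∧ 1 ≤ B2.card ∧ 1 ≤ B3.card :=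
          ⟨Finset.card_pos.mpr hn1, Finset.card_pos.mpr hn2, Finset.card_pos.mpr hn3⟩
        have i12 := ih (B1 ∪ B2) g lam (hsub _ hsub12).1 (hsub _ hsub12).2.1
          (hsub _ hsub12).2.2 (by omega) (by omega)
        have i23 := ih (B2 ∪ B3) g lam (hsub _ hsub23).1 (hsub _ hsub23).2.1
          (hsub _ hsub23).2.2 (by omega) (by omega)
        have i31 := ih (B3 ∪ B1) g lam (hsub _ hsub31).1 (hsub _ hsub31).2.1
          (hsub _ hsub31).2.2 (by omega) (by omega)
        rw [i12, i23, i31]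
        have p12 : ∏ a ∈ B1 ∪ B2, lam a = (∏ a ∈ B1, lam a) * ∏ a ∈ B2, lam a :=
          Finset.prod_union d12
        have p23 : ∏ a ∈ B2 ∪ B3, lam a = (∏ a ∈ B2, lam a) * ∏ a ∈ B3, lam a :=
          Finset.prod_union d23
        have p31 : ∏ a ∈ B3 ∪ B1, lam a = (∏ a ∈ B3, lam a) * ∏ a ∈ B1, lam a :=
          Finset.prod_union d13.symm
        have pQ : Q = ((∏ a ∈ B1, lam a) * ∏ a ∈ B2, lam a) * ∏ a ∈ B3, lam a := by
          rw [hQ, ← hu, Finset.prod_union hd123, Finset.prod_union d12]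
        have halg : (∏ a ∈ B1 ∪ B2, lam a) * SAux d n (B1 ∪ B2) *
            ((∏ a ∈ B2 ∪ B3, lam a) * SAux d n (B2 ∪ B3)) *
            ((∏ a ∈ B3 ∪ B1, lam a) * SAux d n (B3 ∪ B1))
            = Q ^ 2 * (SAux d n (B1 ∪ B2) * SAux d n (B2 ∪ B3) * SAux d n (B3 ∪ B1)) := by
          rw [p12, p23, p31, pQ]; ring
        rw [halg, Real.sqrt_mul (sq_nonneg Q), Real.sqrt_sq hQpos.le]
      have hset : ({t : ℝ | ∃ B : Finset (E d) × Finset (E d) × Finset (E d),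
          (B.1.Nonempty ∧ B.2.1.Nonempty ∧ B.2.2.Nonempty ∧ Disjoint B.1 B.2.1 ∧
            Disjoint B.1 B.2.2 ∧ Disjoint B.2.1 B.2.2 ∧ B.1 ∪ B.2.1 ∪ B.2.2 = A.image g) ∧
          t = Real.sqrt (SAux d n (B.1 ∪ B.2.1) * SAux d n (B.2.1 ∪ B.2.2) *
            SAux d n (B.2.2 ∪ B.1))})
          = Q • {t : ℝ | ∃ B : Finset (E d) × Finset (E d) × Finset (E d),
          (B.1.Nonempty ∧ B.2.1.Nonempty ∧ B.2.2.Nonempty ∧ Disjoint B.1 B.2.1 ∧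
            Disjoint B.1 B.2.2 ∧ Disjoint B.2.1 B.2.2 ∧ B.1 ∪ B.2.1 ∪ B.2.2 = A) ∧
          t = Real.sqrt (SAux d n (B.1 ∪ B.2.1) * SAux d n (B.2.1 ∪ B.2.2) *
            SAux d n (B.2.2 ∪ B.1))} := by
        ext t
        constructor
        · rintro ⟨⟨C1, C2, C3⟩, ⟨hne1, hne2, hne3, h12, h13, h23, hu⟩, rfl⟩
          simp only at hne1 hne2 hne3 h12 h13 h23 hu ⊢
          have hmemi : ∀ a ∈ A, g a ∈ C1 ∪ C2 ∪ C3 := by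
            intro a ha
            rw [hu]
            exact Finset.mem_image_of_mem g ha
          have hBu : (A.filter (fun a => g a ∈ C1)) ∪ (A.filter (fun a => g a ∈ C2)) ∪
              (A.filter (fun a => g a ∈ C3)) = A := by
            ext a
            simp only [Finset.mem_union, Finset.mem_filter]
            constructor
            · tauto
            · intro ha
              have := hmemi a ha
              simp only [Finset.mem_union] at this
              tauto
          have hd : ∀ (C C' : Finset (E d)), Disjoint C C' →
              Disjoint (A.filter (fun a => g a ∈ C)) (A.filter (fun a => g a ∈ C')) := by
            intro C C' hCC'
            rw [Finset.disjoint_left]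
            intro a haC haC'
            exact (Finset.disjoint_left.mp hCC') (Finset.mem_filter.mp haC).2
              (Finset.mem_filter.mp haC').2
          have hne : ∀ C : Finset (E d), C.Nonempty → C ⊆ C1 ∪ C2 ∪ C3 →
              (A.filter (fun a => g a ∈ C)).Nonempty := by
            intro C hC hCsub
            obtain ⟨c, hc⟩ := hC
            have hcim : c ∈ A.image g := by rw [← hu]; exact hCsub hc
            obtain ⟨a, ha, rfl⟩ := Finset.mem_image.mp hcim
            exact ⟨a, Finset.mem_filter.mpr ⟨ha, hc⟩⟩
          have himg : ∀ (C C' : Finset (E d)), C ∪ C' ⊆ C1 ∪ C2 ∪ C3 →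
              ((A.filter (fun a => g a ∈ C)) ∪ (A.filter (fun a => g a ∈ C'))).image g
                = C ∪ C' := by
            intro C C' hCsub
            ext c
            simp only [Finset.mem_image, Finset.mem_union, Finset.mem_filter]
            constructor
            · rintro ⟨a, ha, rfl⟩
              tauto
            · intro hc
              have hcim : c ∈ A.image g := by
                rw [← hu]
                exact hCsub (Finset.mem_union.mpr hc)
              obtain ⟨a, ha, rfl⟩ := Finset.mem_image.mp hcim
              exact ⟨a, by tauto, rfl⟩
          have s1 : C1 ⊆ C1 ∪ C2 ∪ C3 := by
            intro c hc; simp only [Finset.mem_union]; tauto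
          have s2 : C2 ⊆ C1 ∪ C2 ∪ C3 := by
            intro c hc; simp only [Finset.mem_union]; tauto
          have s3 : C3 ⊆ C1 ∪ C2 ∪ C3 := by
            intro c hc; simp only [Finset.mem_union]; tauto
          have s12 : C1 ∪ C2 ⊆ C1 ∪ C2 ∪ C3 := by
            intro c hc; simp only [Finset.mem_union] at hc ⊢; tauto
          have s23 : C2 ∪ C3 ⊆ C1 ∪ C2 ∪ C3 := by
            intro c hc; simp only [Finset.mem_union] at hc ⊢; tauto
          have s31 : C3 ∪ C1 ⊆ C1 ∪ C2 ∪ C3 := by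
            intro c hc; simp only [Finset.mem_union] at hc ⊢; tauto
          have e12 := himg C1 C2 s12
          have e23 := himg C2 C3 s23
          have e31 := himg C3 C1 s31
          rw [← e12, ← e23, ← e31, key _ _ _ (hne _ hne1 s1) (hne _ hne2 s2)
            (hne _ hne3 s3) (hd _ _ h12) (hd _ _ h13) (hd _ _ h23) hBu]
          refine Set.mem_smul_set.mpr ⟨_, ⟨⟨_, _, _⟩, ⟨hne _ hne1 s1, hne _ hne2 s2,
            hne _ hne3 s3, hd _ _ h12, hd _ _ h13, hd _ _ h23, hBu⟩, rfl⟩, ?_⟩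
          rw [smul_eq_mul]
          rfl
        · rintro ⟨t0, ⟨⟨B1, B2, B3⟩, ⟨hne1, hne2, hne3, h12, h13, h23, hu⟩, rfl⟩, rfl⟩
          simp only at hne1 hne2 hne3 h12 h13 h23 hu
          have hBsub : ∀ B : Finset (E d), B ⊆ B1 ∪ B2 ∪ B3 → B ⊆ A := by
            intro B hB; rw [← hu]; exact hB
          have hdisj : ∀ B B' : Finset (E d), B ⊆ A → B' ⊆ A → Disjoint B B' →
              Disjoint (B.image g) (B'.image g) := by
            intro B B' hB hB' hBB'
            rw [Finset.disjoint_left]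
            rintro c hc hc'
            obtain ⟨a, ha, rfl⟩ := Finset.mem_image.mp hc
            obtain ⟨b, hb, hba⟩ := Finset.mem_image.mp hc'
            have hab : b = a := hinj (Finset.mem_coe.mpr (hB' hb))
              (Finset.mem_coe.mpr (hB ha)) hba
            exact (Finset.disjoint_left.mp hBB') ha (hab ▸ hb)
          have sb1 : B1 ⊆ A := hBsub _ (by intro x hx; simp only [Finset.mem_union]; tauto)
          have sb2 : B2 ⊆ A := hBsub _ (by intro x hx; simp only [Finset.mem_union]; tauto)
          have sb3 : B3 ⊆ A := hBsub _ (by intro x hx; simp only [Finset.mem_union]; tauto)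
          refine ⟨⟨B1.image g, B2.image g, B3.image g⟩, ⟨hne1.image g, hne2.image g,
            hne3.image g, hdisj _ _ sb1 sb2 h12, hdisj _ _ sb1 sb3 h13,
            hdisj _ _ sb2 sb3 h23, ?_⟩, ?_⟩
          · show B1.image g ∪ B2.image g ∪ B3.image g = A.image g
            rw [← Finset.image_union, ← Finset.image_union, hu]
          · show Q • _ = _
            rw [← Finset.image_union, ← Finset.image_union, ← Finset.image_union,
              key B1 B2 B3 hne1 hne2 hne3 h12 h13 h23 hu, smul_eq_mul]
      rw [hset, Real.sInf_smul_of_nonneg hQpos.le, smul_eq_mul]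

end Covariant

/-- The function `S` is conformally covariant of scaling dimension `-1`:
if `ψ ∈ Möb(ℝ^d)` then `S(ψ(A)) = S(A) ∏_{a ∈ A} |det Dψ(a)|^{1/d}` for every finite set
`A ⊆ ℝ^d ∖ ψ⁻¹(∞)` with at least two elements. -/
theorem statement13 (d : ℕ) (ψ : Equiv.Perm (Option (E d))) (hψ : ψ ∈ Mob d)
    (A : Finset (E d)) (hA : 2 ≤ A.card) (hpole : ∀ a ∈ A, ψ (some a) ≠ none) :
    Sfun (A.image (mobFun ψ)) = Sfun A * ∏ a ∈ A, |jacDet ψ a| ^ (1 / (d : ℝ)) := by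
  rcases Nat.eq_zero_or_pos d with rfl | hd
  · exfalso
    obtain ⟨a, ha, b, hb, hab⟩ := Finset.one_lt_card.mp (by omega : 1 < A.card)
    exact hab (PiLp.ext fun i => i.elim0)
  obtain ⟨lam, hlam⟩ := conformal hψ
  have hpos : ∀ a ∈ A, 0 < lam a := fun a ha => (hlam a (hpole a ha)).1
  have hjac : ∀ a ∈ A, |jacDet ψ a| = lam a ^ d := fun a ha => (hlam a (hpole a ha)).2.1
  have hdist : ∀ x ∈ A, ∀ y ∈ A, dist (mobFun ψ x) (mobFun ψ y) ^ 2
      = lam x * lam y * dist x y ^ 2 :=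
    fun x hx y hy => (hlam x (hpole x hx)).2.2 y (hpole y hy)
  have hsome : ∀ a ∈ A, ψ (some a) = some (mobFun ψ a) := by
    intro a ha
    cases h : ψ (some a) with
    | none => exact absurd h (hpole a ha)
    | some u => rw [mobFun, h]; rfl
  have hinj : Set.InjOn (mobFun ψ) ↑A := by
    intro a ha b hb hab
    have h1 := hsome a (Finset.mem_coe.mp ha)
    have h2 := hsome b (Finset.mem_coe.mp hb)
    have h3 : ψ (some a) = ψ (some b) := by rw [h1, h2, hab]
    simpa using ψ.injective h3
  have hcard : (A.image (mobFun ψ)).card = A.card := Finset.card_image_of_injOn hinj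
  have hcov := SAux_covariant A.card A (mobFun ψ) lam hpos hinj hdist hA (le_refl _)
  have hprod : ∏ a ∈ A, lam a = ∏ a ∈ A, |jacDet ψ a| ^ (1 / (d : ℝ)) := by
    refine Finset.prod_congr rfl fun a ha => ?_
    rw [hjac a ha]
    have h0 : (0:ℝ) ≤ lam a := (hpos a ha).le
    rw [← Real.rpow_natCast (lam a) d, ← Real.rpow_mul h0,
      show (d:ℝ) * (1 / (d:ℝ)) = 1 by field_simp, Real.rpow_one]
  simp only [Sfun]
  rw [hcard, hcov, hprod, mul_comm]

end LRP
end

section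
/- For every finite set A ⊆ ℝ^d with |A| ≥ 2, sweep(A) ≍_{|A|} diam(A)·spread(A), i.e. there are positive constants c(n), C(n) depending only on n = |A| (not on A or d) with c(n)·diam(A)·spread(A) ≤ sweep(A) ≤ C(n)·diam(A)·spread(A). -/
open MeasureTheory ENNReal Filter
open scoped Classical
namespace LRP

/-! ## Sweep and spread -/

/-- `par` is (the parent map of) an arborescence on `A` with root `root`: a directed
tree with vertex set `A` oriented towards `root`. -/
def IsArbor {d : ℕ} (A : Finset (E d)) (par : E d → E d) (root : E d) : Prop :=
  root ∈ A ∧ par root = root ∧ (∀ x ∈ A, par x ∈ A) ∧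
    ∀ x ∈ A, ∃ n : ℕ, par^[n] x = root

/-- The set `A_x` associated to a point `x` of an arborescence: `x`, the parent of `x`,
and all the vertices having `x` as an ancestor (and `A_root = A`). -/
noncomputable def branch {d : ℕ} (A : Finset (E d)) (par : E d → E d) (root x : E d) :
    Set (E d) :=
  if x = root then (A : Set (E d))
  else insert (par x) {y | y ∈ A ∧ ∃ n : ℕ, par^[n] y = x}

/-- `sweep(A) = min ∏_{x ∈ A} diam(A_x)`, the minimum being over arborescences on `A`. -/
noncomputable def sweep {d : ℕ} (A : Finset (E d)) : ℝ :=
  sInf {t : ℝ | ∃ par : E d → E d, ∃ root : E d, IsArbor A par root ∧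
    t = ∏ x ∈ A, Metric.diam (branch A par root x)}

/-- The (Euclidean) length of an unordered pair of points. -/
noncomputable def edgeLen {d : ℕ} : Sym2 (E d) → ℝ :=
  Sym2.lift ⟨fun x y => dist x y, fun x y => dist_comm x y⟩

/-- `T` is the edge set of a tree with vertex set `A`. -/
def IsSpanTree {d : ℕ} (A : Finset (E d)) (T : Finset (Sym2 (E d))) : Prop :=
  (∀ e ∈ T, ¬e.IsDiag) ∧ (∀ e ∈ T, ∀ z ∈ e, z ∈ A) ∧ T.card + 1 = A.card ∧
    ∀ x ∈ A, ∀ y ∈ A, Relation.ReflTransGen (fun a b => s(a, b) ∈ T) x y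

/-- `spread(A) = min_T ∏_{{x,y} ∈ T} ‖x - y‖₂`, the minimum being over edge sets of
trees with vertex set `A`. -/
noncomputable def spread {d : ℕ} (A : Finset (E d)) : ℝ :=
  sInf {t : ℝ | ∃ T : Finset (Sym2 (E d)), IsSpanTree A T ∧ t = ∏ e ∈ T, edgeLen e}

/-- `min √(sweep(A₁∪A₂) sweep(A₂∪A₃) sweep(A₃∪A₁))` over partitions of `A` into three
nonempty sets. -/
noncomputable def triMin {d : ℕ} (A : Finset (E d)) : ℝ :=
  sInf {t : ℝ | ∃ B : Finset (E d) × Finset (E d) × Finset (E d),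
    (B.1.Nonempty ∧ B.2.1.Nonempty ∧ B.2.2.Nonempty ∧
      Disjoint B.1 B.2.1 ∧ Disjoint B.1 B.2.2 ∧ Disjoint B.2.1 B.2.2 ∧
      B.1 ∪ B.2.1 ∪ B.2.2 = A) ∧
    t = Real.sqrt (sweep (B.1 ∪ B.2.1) * sweep (B.2.1 ∪ B.2.2) * sweep (B.2.2 ∪ B.1))}

end LRP

namespace LRP

variable {d : ℕ}

lemma edgeLen_mk (x y : E d) : edgeLen s(x, y) = dist x y := rfl

lemma edgeLen_nonneg (e : Sym2 (E d)) : 0 ≤ edgeLen e := by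
  induction e using Sym2.ind with
  | _ x y => rw [edgeLen_mk]; exact dist_nonneg

/-- reflexive-transitive closure along edges of `T` -/
abbrev RT (T : Finset (Sym2 (E d))) : E d → E d → Prop :=
  Relation.ReflTransGen (fun a b => s(a, b) ∈ T)

lemma RT_symm {T : Finset (Sym2 (E d))} : Symmetric (RT T) :=
  fun x y h => (@Relation.ReflTransGen.stdSymm _ _ ⟨fun a b h => by rwa [Sym2.eq_swap]⟩).symm x y h

lemma RT_mono {T T' : Finset (Sym2 (E d))} (h : T ⊆ T') {a b : E d} (hab : RT T a b) :
    RT T' a b := by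
  induction hab with
  | refl => exact .refl
  | tail _ h2 ih => exact ih.tail (h h2)

/-- the component of `u` inside `A` w.r.t. edges `T'` -/
noncomputable def comp (A : Finset (E d)) (T' : Finset (Sym2 (E d))) (u : E d) :
    Finset (E d) := A.filter (fun x => RT T' u x)

lemma mem_comp {A : Finset (E d)} {T' : Finset (Sym2 (E d))} {u x : E d} :
    x ∈ comp A T' u ↔ x ∈ A ∧ RT T' u x := Finset.mem_filter

lemma comp_subset {A : Finset (E d)} {T' u} : comp A T' u ⊆ A := Finset.filter_subset _ _

lemma comp_step {A : Finset (E d)} {T' : Finset (Sym2 (E d))} {u a b : E d}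
    (ha : a ∈ comp A T' u) (hab : s(a, b) ∈ T') (hb : b ∈ A) : b ∈ comp A T' u := by
  rw [mem_comp] at ha ⊢
  exact ⟨hb, ha.2.tail hab⟩

/-- edges of `T'` whose endpoints all lie in `B` -/
noncomputable def restr (T' : Finset (Sym2 (E d))) (B : Finset (E d)) :
    Finset (Sym2 (E d)) := T'.filter (fun e => ∀ z ∈ e, z ∈ B)

lemma restr_subset {T' : Finset (Sym2 (E d))} {B} : restr T' B ⊆ T' :=
  Finset.filter_subset _ _

/-- within a component, connectivity holds using only internal edges -/
lemma comp_conn {A : Finset (E d)} {T' : Finset (Sym2 (E d))} {u x : E d}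
    (hend : ∀ e ∈ T', ∀ z ∈ e, z ∈ A) (hx : x ∈ comp A T' u) :
    RT (restr T' (comp A T' u)) u x := by
  rw [mem_comp] at hx
  obtain ⟨hxA, hr⟩ := hx
  clear hxA
  induction hr with
  | refl => exact .refl
  | @tail b c h1 h2 ih =>
    have hbA : b ∈ A := hend _ h2 _ (Sym2.mem_mk_left _ _)
    have hcA : c ∈ A := hend _ h2 _ (Sym2.mem_mk_right _ _)
    have hb : b ∈ comp A T' u := mem_comp.2 ⟨hbA, h1⟩
    have hc : c ∈ comp A T' u := comp_step hb h2 hcA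
    refine ih.tail ?_
    refine Finset.mem_filter.2 ⟨h2, ?_⟩
    intro z hz
    rcases Sym2.mem_iff.1 hz with rfl | rfl
    · exact hb
    · exact hc

/-- every vertex of `A` lies in the `u`- or `v`-component after deleting edge `s(u,v)` -/
lemma split_cover {A : Finset (E d)} {T : Finset (Sym2 (E d))} {u v x : E d}
    (hx : RT T u x) (hxA : x ∈ A) (huA : u ∈ A) (hvA : v ∈ A)
    (hend : ∀ e ∈ T, ∀ z ∈ e, z ∈ A) :
    x ∈ comp A (T.erase s(u, v)) u ∨ x ∈ comp A (T.erase s(u, v)) v := by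
  induction hx with
  | refl => exact Or.inl (mem_comp.2 ⟨huA, .refl⟩)
  | @tail b c h1 h2 ih =>
    have hbA : b ∈ A := hend _ h2 _ (Sym2.mem_mk_left _ _)
    have hcA : c ∈ A := hend _ h2 _ (Sym2.mem_mk_right _ _)
    by_cases he : s(b, c) = s(u, v)
    · rcases Sym2.eq_iff.1 he with ⟨rfl, rfl⟩ | ⟨rfl, rfl⟩
      · exact Or.inr (mem_comp.2 ⟨hcA, .refl⟩)
      · exact Or.inl (mem_comp.2 ⟨hcA, .refl⟩)
    · have h2' : s(b, c) ∈ T.erase s(u, v) := Finset.mem_erase.2 ⟨he, h2⟩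
      rcases ih hbA with hb | hb
      · exact Or.inl (comp_step hb h2' hcA)
      · exact Or.inr (comp_step hb h2' hcA)

variable {d : ℕ}

lemma RT_erase_of_conn {T : Finset (Sym2 (E d))} {u v : E d}
    (huv : RT (T.erase s(u, v)) u v) {x y : E d} (h : RT T x y) :
    RT (T.erase s(u, v)) x y := by
  induction h with
  | refl => exact .refl
  | @tail b c h1 h2 ih =>
    by_cases he : s(b, c) = s(u, v)
    · rcases Sym2.eq_iff.1 he with ⟨rfl, rfl⟩ | ⟨rfl, rfl⟩
      · exact ih.trans huv
      · exact ih.trans (RT_symm huv)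
    · exact ih.tail (Finset.mem_erase.2 ⟨he, h2⟩)

/-- A connected graph on `A` has at least `|A| - 1` edges. -/
lemma card_le_of_conn : ∀ N : ℕ, ∀ T : Finset (Sym2 (E d)), ∀ A : Finset (E d),
    T.card ≤ N → (∀ e ∈ T, ∀ z ∈ e, z ∈ A) →
    (∀ x ∈ A, ∀ y ∈ A, RT T x y) → A.Nonempty → A.card ≤ T.card + 1 := by
  intro N
  induction N with
  | zero =>
    intro T A hTN hend hconn hne
    by_cases hA : A.card ≤ 1
    · have := Finset.card_pos.2 hne; omega
    · exfalso
      have hA2 : 1 < A.card := by omega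
      obtain ⟨a, ha, b, hb, hab⟩ := Finset.one_lt_card.1 hA2
      rcases (hconn a ha b hb).cases_head with h | ⟨z, hz, _⟩
      · exact hab h
      · have : T = ∅ := Finset.card_eq_zero.1 (by omega)
        rw [this] at hz; exact absurd hz (Finset.notMem_empty _)
  | succ N ih =>
    intro T A hTN hend hconn hne
    by_cases hA : A.card ≤ 1
    · have := Finset.card_pos.2 hne; omega
    have hA2 : 1 < A.card := by omega
    obtain ⟨a, ha, b, hb, hab⟩ := Finset.one_lt_card.1 hA2
    rcases (hconn a ha b hb).cases_head with h | ⟨z, hz, _⟩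
    · exact absurd h hab
    set u := a
    set v := z
    have he : s(u, v) ∈ T := hz
    have huA : u ∈ A := ha
    have hvA : v ∈ A := hend _ he _ (Sym2.mem_mk_right _ _)
    have hTe : (T.erase s(u, v)).card = T.card - 1 := Finset.card_erase_of_mem he
    have hT1 : 1 ≤ T.card := Finset.card_pos.2 ⟨_, he⟩
    have hend' : ∀ e ∈ T.erase s(u, v), ∀ z ∈ e, z ∈ A :=
      fun e heT => hend e (Finset.mem_of_mem_erase heT)
    by_cases hv : v ∈ comp A (T.erase s(u, v)) u
    · -- deleting the edge keeps connectivity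
      have huv : RT (T.erase s(u, v)) u v := (mem_comp.1 hv).2
      have := ih (T.erase s(u, v)) A (by omega) hend'
        (fun x hx y hy => RT_erase_of_conn huv (hconn x hx y hy)) hne
      omega
    · -- genuine split
      set A₁ := comp A (T.erase s(u, v)) u with hA₁
      set A₂ := comp A (T.erase s(u, v)) v with hA₂
      have hdisj : Disjoint A₁ A₂ := by
        rw [Finset.disjoint_left]
        intro x hx1 hx2
        exact hv (mem_comp.2 ⟨hvA,
          ((mem_comp.1 hx1).2).trans (RT_symm ((mem_comp.1 hx2).2))⟩)
      have hcover : ∀ x ∈ A, x ∈ A₁ ∨ x ∈ A₂ :=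
        fun x hx => split_cover (hconn u huA x hx) hx huA hvA hend
      set T₁ := restr (T.erase s(u, v)) A₁ with hT₁
      set T₂ := restr (T.erase s(u, v)) A₂ with hT₂
      have hsub1 : T₁ ⊆ T.erase s(u, v) := restr_subset
      have hsub2 : T₂ ⊆ T.erase s(u, v) := restr_subset
      have h1 := ih T₁ A₁ (le_trans (Finset.card_le_card hsub1) (by omega))
        (fun e heT z hze => (Finset.mem_filter.1 heT).2 z hze)
        (fun x hx y hy => (RT_symm (comp_conn hend' hx)).trans (comp_conn hend' hy))
        ⟨u, mem_comp.2 ⟨huA, .refl⟩⟩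
      have h2 := ih T₂ A₂ (le_trans (Finset.card_le_card hsub2) (by omega))
        (fun e heT z hze => (Finset.mem_filter.1 heT).2 z hze)
        (fun x hx y hy => (RT_symm (comp_conn hend' hx)).trans (comp_conn hend' hy))
        ⟨v, mem_comp.2 ⟨hvA, .refl⟩⟩
      have hdT : Disjoint T₁ T₂ := by
        rw [Finset.disjoint_left]
        intro f hf1 hf2
        have hp : f.out.1 ∈ f := Sym2.out_fst_mem f
        have := (Finset.mem_filter.1 hf1).2 _ hp
        have := (Finset.mem_filter.1 hf2).2 _ hp
        exact Finset.disjoint_left.1 hdisj ‹f.out.1 ∈ A₁› ‹f.out.1 ∈ A₂›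
      have hcardT : T₁.card + T₂.card ≤ T.card - 1 := by
        have : (T₁ ∪ T₂).card = T₁.card + T₂.card := Finset.card_union_of_disjoint hdT
        have hsub : T₁ ∪ T₂ ⊆ T.erase s(u, v) := Finset.union_subset hsub1 hsub2
        have := Finset.card_le_card hsub
        omega
      have hcardA : A.card ≤ A₁.card + A₂.card := by
        have hsub : A ⊆ A₁ ∪ A₂ := fun x hx => Finset.mem_union.2 (hcover x hx)
        have := Finset.card_le_card hsub
        have := Finset.card_union_le A₁ A₂
        omega
      omega

variable {d : ℕ}

lemma sum_edgeLen_nonneg (T : Finset (Sym2 (E d))) : 0 ≤ ∑ e ∈ T, edgeLen e :=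
  Finset.sum_nonneg fun e _ => edgeLen_nonneg e

lemma sum_edgeLen_mono {T T' : Finset (Sym2 (E d))} (h : T ⊆ T') :
    ∑ e ∈ T, edgeLen e ≤ ∑ e ∈ T', edgeLen e :=
  Finset.sum_le_sum_of_subset_of_nonneg h fun e _ _ => edgeLen_nonneg e

/-- In a connected graph, distances are bounded by the total edge length. -/
lemma dist_le_sum_edges : ∀ N : ℕ, ∀ T : Finset (Sym2 (E d)), ∀ A : Finset (E d),
    T.card ≤ N → (∀ e ∈ T, ∀ z ∈ e, z ∈ A) →
    (∀ x ∈ A, ∀ y ∈ A, RT T x y) →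
    ∀ x ∈ A, ∀ y ∈ A, dist x y ≤ ∑ e ∈ T, edgeLen e := by
  intro N
  induction N with
  | zero =>
    intro T A hTN hend hconn x hx y hy
    rcases (hconn x hx y hy).cases_head with rfl | ⟨z, hz, _⟩
    · rw [dist_self]; exact sum_edgeLen_nonneg T
    · exfalso
      have : T = ∅ := Finset.card_eq_zero.1 (by omega)
      rw [this] at hz; exact absurd hz (Finset.notMem_empty _)
  | succ N ih =>
    intro T A hTN hend hconn x hx y hy
    rcases (hconn x hx y hy).cases_head with rfl | ⟨v, hz, _⟩
    · rw [dist_self]; exact sum_edgeLen_nonneg T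
    have he : s(x, v) ∈ T := hz
    have hvA : v ∈ A := hend _ he _ (Sym2.mem_mk_right _ _)
    have hTe : (T.erase s(x, v)).card = T.card - 1 := Finset.card_erase_of_mem he
    have hT1 : 1 ≤ T.card := Finset.card_pos.2 ⟨_, he⟩
    have hend' : ∀ e ∈ T.erase s(x, v), ∀ z ∈ e, z ∈ A :=
      fun e heT => hend e (Finset.mem_of_mem_erase heT)
    by_cases hv : v ∈ comp A (T.erase s(x, v)) x
    · have huv : RT (T.erase s(x, v)) x v := (mem_comp.1 hv).2
      refine le_trans (ih (T.erase s(x, v)) A (by omega) hend'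
        (fun a ha b hb => RT_erase_of_conn huv (hconn a ha b hb)) x hx y hy) ?_
      exact sum_edgeLen_mono (Finset.erase_subset _ _)
    · set A₁ := comp A (T.erase s(x, v)) x with hA₁
      set A₂ := comp A (T.erase s(x, v)) v with hA₂
      set T₁ := restr (T.erase s(x, v)) A₁ with hT₁
      set T₂ := restr (T.erase s(x, v)) A₂ with hT₂
      have hsub1 : T₁ ⊆ T.erase s(x, v) := restr_subset
      have hsub2 : T₂ ⊆ T.erase s(x, v) := restr_subset
      have hx1 : x ∈ A₁ := mem_comp.2 ⟨hx, .refl⟩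
      have hv2 : v ∈ A₂ := mem_comp.2 ⟨hvA, .refl⟩
      rcases split_cover (hconn x hx y hy) hy hx hvA hend with hy1 | hy2
      · -- same component
        refine le_trans (ih T₁ A₁ (le_trans (Finset.card_le_card hsub1) (by omega))
          (fun e heT z hze => (Finset.mem_filter.1 heT).2 z hze)
          (fun a ha b hb => (RT_symm (comp_conn hend' ha)).trans (comp_conn hend' hb))
          x hx1 y hy1) ?_
        exact sum_edgeLen_mono (hsub1.trans (Finset.erase_subset _ _))
      · -- other component: go through the edge
        have hd2 : dist v y ≤ ∑ e ∈ T₂, edgeLen e :=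
          ih T₂ A₂ (le_trans (Finset.card_le_card hsub2) (by omega))
            (fun e heT z hze => (Finset.mem_filter.1 heT).2 z hze)
            (fun a ha b hb => (RT_symm (comp_conn hend' ha)).trans (comp_conn hend' hb))
            v hv2 y hy2
        have hnotin : s(x, v) ∉ T₂ := fun hmem => (Finset.mem_erase.1 (hsub2 hmem)).1 rfl
        calc dist x y ≤ dist x v + dist v y := dist_triangle x v y
          _ ≤ edgeLen s(x, v) + ∑ e ∈ T₂, edgeLen e := by
              rw [edgeLen_mk]; exact add_le_add le_rfl hd2
          _ = ∑ e ∈ insert s(x, v) T₂, edgeLen e := (Finset.sum_insert hnotin).symm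
          _ ≤ ∑ e ∈ T, edgeLen e := sum_edgeLen_mono (Finset.insert_subset he
              (hsub2.trans (Finset.erase_subset _ _)))

lemma diam_le_sum_edges {A : Finset (E d)} {T : Finset (Sym2 (E d))}
    (hT : IsSpanTree A T) : Metric.diam (A : Set (E d)) ≤ ∑ e ∈ T, edgeLen e := by
  obtain ⟨hdiag, hend, hcard, hconn⟩ := hT
  refine Metric.diam_le_of_forall_dist_le (sum_edgeLen_nonneg T) ?_
  intro x hx y hy
  exact dist_le_sum_edges T.card T A le_rfl hend hconn x hx y hy

/-- Splitting a spanning tree at an edge. -/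
lemma spanTree_split {A : Finset (E d)} {T : Finset (Sym2 (E d))} (hT : IsSpanTree A T)
    {u v : E d} (he : s(u, v) ∈ T) :
    ∃ A₁ A₂ T₁ T₂ : _, u ∈ A₁ ∧ v ∈ A₂ ∧ Disjoint A₁ A₂ ∧ A₁ ∪ A₂ = A ∧
      Disjoint T₁ T₂ ∧ s(u, v) ∉ T₁ ∪ T₂ ∧ insert s(u, v) (T₁ ∪ T₂) = T ∧
      IsSpanTree A₁ T₁ ∧ IsSpanTree A₂ T₂ := by
  obtain ⟨hdiag, hend, hcard, hconn⟩ := hT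
  have huA : u ∈ A := hend _ he _ (Sym2.mem_mk_left _ _)
  have hvA : v ∈ A := hend _ he _ (Sym2.mem_mk_right _ _)
  have hTe : (T.erase s(u, v)).card = T.card - 1 := Finset.card_erase_of_mem he
  have hT1 : 1 ≤ T.card := Finset.card_pos.2 ⟨_, he⟩
  have hend' : ∀ e ∈ T.erase s(u, v), ∀ z ∈ e, z ∈ A :=
    fun e heT => hend e (Finset.mem_of_mem_erase heT)
  have hv : v ∉ comp A (T.erase s(u, v)) u := by
    intro hv
    have huv : RT (T.erase s(u, v)) u v := (mem_comp.1 hv).2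
    have := card_le_of_conn (T.erase s(u, v)).card (T.erase s(u, v)) A le_rfl hend'
      (fun a ha b hb => RT_erase_of_conn huv (hconn a ha b hb)) ⟨u, huA⟩
    omega
  set A₁ := comp A (T.erase s(u, v)) u with hA₁
  set A₂ := comp A (T.erase s(u, v)) v with hA₂
  set T₁ := restr (T.erase s(u, v)) A₁ with hT₁
  set T₂ := restr (T.erase s(u, v)) A₂ with hT₂
  have hsub1 : T₁ ⊆ T.erase s(u, v) := restr_subset
  have hsub2 : T₂ ⊆ T.erase s(u, v) := restr_subset
  have hu1 : u ∈ A₁ := mem_comp.2 ⟨huA, .refl⟩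
  have hv2 : v ∈ A₂ := mem_comp.2 ⟨hvA, .refl⟩
  have hdisj : Disjoint A₁ A₂ := by
    rw [Finset.disjoint_left]
    intro w hw1 hw2
    exact hv (mem_comp.2 ⟨hvA, ((mem_comp.1 hw1).2).trans (RT_symm ((mem_comp.1 hw2).2))⟩)
  have hcover : ∀ x ∈ A, x ∈ A₁ ∨ x ∈ A₂ :=
    fun x hx => split_cover (hconn u huA x hx) hx huA hvA hend
  have hAeq : A₁ ∪ A₂ = A := by
    apply Finset.Subset.antisymm
    · exact Finset.union_subset comp_subset comp_subset
    · exact fun x hx => Finset.mem_union.2 (hcover x hx)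
  have hdT : Disjoint T₁ T₂ := by
    rw [Finset.disjoint_left]
    intro f hf1 hf2
    have hp : f.out.1 ∈ f := Sym2.out_fst_mem f
    exact Finset.disjoint_left.1 hdisj ((Finset.mem_filter.1 hf1).2 _ hp)
      ((Finset.mem_filter.1 hf2).2 _ hp)
  have hnotin : s(u, v) ∉ T₁ ∪ T₂ := by
    intro hmem
    rcases Finset.mem_union.1 hmem with h | h
    · exact (Finset.mem_erase.1 (hsub1 h)).1 rfl
    · exact (Finset.mem_erase.1 (hsub2 h)).1 rfl
  have hTeq : insert s(u, v) (T₁ ∪ T₂) = T := by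
    apply Finset.Subset.antisymm
    · refine Finset.insert_subset he (Finset.union_subset
        (hsub1.trans (Finset.erase_subset _ _)) (hsub2.trans (Finset.erase_subset _ _)))
    · intro f hf
      by_cases hfe : f = s(u, v)
      · exact hfe ▸ Finset.mem_insert_self _ _
      have hf' : f ∈ T.erase s(u, v) := Finset.mem_erase.2 ⟨hfe, hf⟩
      obtain ⟨p, q, rfl⟩ : ∃ p q, f = s(p, q) := ⟨f.out.1, f.out.2, f.out_eq.symm⟩
      have hpA : p ∈ A := hend' _ hf' _ (Sym2.mem_mk_left _ _)
      have hqA : q ∈ A := hend' _ hf' _ (Sym2.mem_mk_right _ _)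
      refine Finset.mem_insert.2 (Or.inr (Finset.mem_union.2 ?_))
      rcases hcover p hpA with hp1 | hp2
      · refine Or.inl (Finset.mem_filter.2 ⟨hf', ?_⟩)
        intro z hz
        rcases Sym2.mem_iff.1 hz with rfl | rfl
        · exact hp1
        · exact comp_step hp1 hf' hqA
      · refine Or.inr (Finset.mem_filter.2 ⟨hf', ?_⟩)
        intro z hz
        rcases Sym2.mem_iff.1 hz with rfl | rfl
        · exact hp2
        · exact comp_step hp2 hf' hqA
  -- cards
  have hc1 : A₁.card ≤ T₁.card + 1 :=
    card_le_of_conn T₁.card T₁ A₁ le_rfl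
      (fun e heT z hze => (Finset.mem_filter.1 heT).2 z hze)
      (fun a ha b hb => (RT_symm (comp_conn hend' ha)).trans (comp_conn hend' hb))
      ⟨u, hu1⟩
  have hc2 : A₂.card ≤ T₂.card + 1 :=
    card_le_of_conn T₂.card T₂ A₂ le_rfl
      (fun e heT z hze => (Finset.mem_filter.1 heT).2 z hze)
      (fun a ha b hb => (RT_symm (comp_conn hend' ha)).trans (comp_conn hend' hb))
      ⟨v, hv2⟩
  have hcA : A₁.card + A₂.card = A.card := by
    rw [← hAeq]; exact (Finset.card_union_of_disjoint hdisj).symm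
  have hcT : T₁.card + T₂.card + 1 = T.card := by
    rw [← hTeq, Finset.card_insert_of_notMem hnotin, Finset.card_union_of_disjoint hdT]
  have hcard1 : T₁.card + 1 = A₁.card := by omega
  have hcard2 : T₂.card + 1 = A₂.card := by omega
  exact ⟨A₁, A₂, T₁, T₂, hu1, hv2, hdisj, hAeq, hdT, hnotin, hTeq,
    ⟨fun e heT => hdiag e (hsub1.trans (Finset.erase_subset _ _) heT),
      fun e heT z hze => (Finset.mem_filter.1 heT).2 z hze, hcard1,
      fun a ha b hb => (RT_symm (comp_conn hend' ha)).trans (comp_conn hend' hb)⟩,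
    ⟨fun e heT => hdiag e (hsub2.trans (Finset.erase_subset _ _) heT),
      fun e heT z hze => (Finset.mem_filter.1 heT).2 z hze, hcard2,
      fun a ha b hb => (RT_symm (comp_conn hend' ha)).trans (comp_conn hend' hb)⟩⟩

variable {d : ℕ} {A : Finset (E d)} {par : E d → E d} {root : E d}

lemma arbor_par_ne (h : IsArbor A par root) {x : E d} (hx : x ∈ A) (hxr : x ≠ root) :
    par x ≠ x := by
  intro hfix
  obtain ⟨n, hn⟩ := h.2.2.2 x hx
  rw [Function.iterate_fixed hfix] at hn
  exact hxr hn

lemma arbor_injOn (h : IsArbor A par root) :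
    Set.InjOn (fun x => s(x, par x)) ↑(A.erase root) := by
  intro x hx y hy hxy
  simp only [Finset.coe_erase, Set.mem_diff, Finset.mem_coe, Set.mem_singleton_iff] at hx hy
  simp only [Sym2.eq_iff] at hxy
  rcases hxy with ⟨h1, _⟩ | ⟨h1, h2⟩
  · exact h1
  · exfalso
    -- x = par y, par x = y : a 2-cycle
    have horb : ∀ n, par^[n] x = x ∨ par^[n] x = y := by
      intro n
      induction n with
      | zero => exact Or.inl rfl
      | succ n ihn =>
        rw [Function.iterate_succ_apply']
        rcases ihn with hh | hh
        · rw [hh, h2]; exact Or.inr rfl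
        · rw [hh, ← h1]; exact Or.inl rfl
    obtain ⟨n, hn⟩ := h.2.2.2 x hx.1
    rcases horb n with hh | hh
    · exact hx.2 (hh ▸ hn)
    · exact hy.2 (hh ▸ hn)

/-- The edge set associated to an arborescence. -/
noncomputable def arborEdges (A : Finset (E d)) (par : E d → E d) (root : E d) :
    Finset (Sym2 (E d)) := (A.erase root).image fun x => s(x, par x)

lemma arbor_reach_RT (h : IsArbor A par root) :
    ∀ n : ℕ, ∀ x, x ∈ A → par^[n] x = root →
      Relation.ReflTransGen (fun a b => s(a, b) ∈ arborEdges A par root) x root := by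
  intro n
  induction n with
  | zero => intro x _ hn; exact hn ▸ .refl
  | succ n ihn =>
    intro x hx hn
    by_cases hxr : x = root
    · exact hxr ▸ .refl
    · refine Relation.ReflTransGen.head ?_ (ihn (par x) (h.2.2.1 x hx) ?_)
      · exact Finset.mem_image.2 ⟨x, Finset.mem_erase.2 ⟨hxr, hx⟩, rfl⟩
      · rwa [← Function.iterate_succ_apply]

lemma arbor_spanTree (h : IsArbor A par root) : IsSpanTree A (arborEdges A par root) := by
  refine ⟨?_, ?_, ?_, ?_⟩
  · intro e he
    obtain ⟨x, hx, rfl⟩ := Finset.mem_image.1 he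
    rw [Sym2.mk_isDiag_iff]
    have hx' := Finset.mem_erase.1 hx
    exact fun hh => arbor_par_ne h hx'.2 hx'.1 hh.symm
  · intro e he z hz
    obtain ⟨x, hx, rfl⟩ := Finset.mem_image.1 he
    have hx' := Finset.mem_erase.1 hx
    rcases Sym2.mem_iff.1 hz with rfl | rfl
    · exact hx'.2
    · exact h.2.2.1 x hx'.2
  · rw [arborEdges, Finset.card_image_of_injOn (arbor_injOn h),
      Finset.card_erase_of_mem h.1]
    have : 1 ≤ A.card := Finset.card_pos.2 ⟨root, h.1⟩
    omega
  · intro x hx y hy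
    obtain ⟨n, hn⟩ := h.2.2.2 x hx
    obtain ⟨m, hm⟩ := h.2.2.2 y hy
    exact (arbor_reach_RT h n x hx hn).trans
      (RT_symm (arbor_reach_RT h m y hy hm))

lemma arbor_prod_edges (h : IsArbor A par root) :
    ∏ e ∈ arborEdges A par root, edgeLen e = ∏ x ∈ A.erase root, dist x (par x) := by
  rw [arborEdges, Finset.prod_image (fun x hx y hy => arbor_injOn h hx hy)]
  exact Finset.prod_congr rfl fun x _ => edgeLen_mk x (par x)

lemma exists_arbor (hne : A.Nonempty) : ∃ par root, IsArbor A par root := by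
  obtain ⟨a, ha⟩ := hne
  exact ⟨fun _ => a, a, ha, rfl, fun x _ => ha, fun x _ => ⟨1, rfl⟩⟩

lemma spread_bddBelow :
    BddBelow {t : ℝ | ∃ T : Finset (Sym2 (E d)), IsSpanTree A T ∧ t = ∏ e ∈ T, edgeLen e} := by
  refine ⟨0, fun t ht => ?_⟩
  obtain ⟨T, _, rfl⟩ := ht
  exact Finset.prod_nonneg fun e _ => edgeLen_nonneg e

lemma spread_le {T : Finset (Sym2 (E d))} (hT : IsSpanTree A T) :
    spread A ≤ ∏ e ∈ T, edgeLen e :=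
  csInf_le spread_bddBelow ⟨T, hT, rfl⟩

lemma spread_nonneg (hne : A.Nonempty) : 0 ≤ spread A := by
  apply le_csInf
  · obtain ⟨par, root, h⟩ := exists_arbor hne
    exact ⟨_, arborEdges A par root, arbor_spanTree h, rfl⟩
  · rintro t ⟨T, _, rfl⟩
    exact Finset.prod_nonneg fun e _ => edgeLen_nonneg e

lemma branch_subset (hmap : ∀ x ∈ A, par x ∈ A) (x : E d) :
    branch A par root x ⊆ insert (par x) (A : Set (E d)) := by
  rw [branch]
  split_ifs with h
  · exact Set.subset_insert _ _
  · exact Set.insert_subset_insert fun y hy => hy.1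

lemma branch_bounded (hmap : ∀ x ∈ A, par x ∈ A) (x : E d) :
    Bornology.IsBounded (branch A par root x) :=
  ((A.finite_toSet.insert (par x)).isBounded).subset (branch_subset hmap x)

lemma self_mem_branch {x : E d} (hx : x ∈ A) : x ∈ branch A par root x := by
  rw [branch]
  split_ifs with h
  · exact hx
  · exact Set.mem_insert_iff.2 (Or.inr ⟨hx, 0, rfl⟩)

lemma par_mem_branch {x : E d} (hx : x ∈ A) (hmap : ∀ x ∈ A, par x ∈ A) (hxr : x ≠ root) :
    par x ∈ branch A par root x := by
  rw [branch, if_neg hxr]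
  exact Set.mem_insert _ _

lemma branch_root : branch A par root root = (A : Set (E d)) := by
  rw [branch, if_pos rfl]

lemma sweep_bddBelow :
    BddBelow {t : ℝ | ∃ par : E d → E d, ∃ root : E d, IsArbor A par root ∧
      t = ∏ x ∈ A, Metric.diam (branch A par root x)} := by
  refine ⟨0, fun t ht => ?_⟩
  obtain ⟨par, root, _, rfl⟩ := ht
  exact Finset.prod_nonneg fun x _ => Metric.diam_nonneg

lemma sweep_le (h : IsArbor A par root) :
    sweep A ≤ ∏ x ∈ A, Metric.diam (branch A par root x) :=
  csInf_le sweep_bddBelow ⟨par, root, h, rfl⟩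

/-- The lower bound: `diam(A) * spread(A) ≤ sweep(A)`. -/
theorem diam_mul_spread_le_sweep (hne : A.Nonempty) :
    Metric.diam (A : Set (E d)) * spread A ≤ sweep A := by
  apply le_csInf
  · obtain ⟨par, root, h⟩ := exists_arbor hne
    exact ⟨_, par, root, h, rfl⟩
  rintro t ⟨par, root, h, rfl⟩
  rw [← Finset.mul_prod_erase A _ h.1, branch_root]
  refine mul_le_mul_of_nonneg_left ?_ Metric.diam_nonneg
  calc spread A ≤ ∏ e ∈ arborEdges A par root, edgeLen e := spread_le (arbor_spanTree h)
    _ = ∏ x ∈ A.erase root, dist x (par x) := arbor_prod_edges h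
    _ ≤ ∏ x ∈ A.erase root, Metric.diam (branch A par root x) := by
        refine Finset.prod_le_prod (fun x _ => dist_nonneg) ?_
        intro x hx
        have hx' := Finset.mem_erase.1 hx
        exact Metric.dist_le_diam_of_mem (branch_bounded h.2.2.1 x)
          (self_mem_branch hx'.2) (par_mem_branch hx'.2 h.2.2.1 hx'.1)

variable {d : ℕ}

/-- Glue two arborescences: attach the root of the second to the root of the first. -/
noncomputable def glue (A₂ : Finset (E d)) (par₁ par₂ : E d → E d) (r₁ r₂ : E d) :
    E d → E d :=
  fun x => if x ∈ A₂ then (if x = r₂ then r₁ else par₂ x) else par₁ x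

section Glue

variable {A₁ A₂ : Finset (E d)} {par₁ par₂ : E d → E d} {r₁ r₂ : E d}
  (h₁ : IsArbor A₁ par₁ r₁) (h₂ : IsArbor A₂ par₂ r₂) (hdisj : Disjoint A₁ A₂)

local notation "par" => glue A₂ par₁ par₂ r₁ r₂

include hdisj in
lemma glue_eq₁ {x : E d} (hx : x ∈ A₁) : par x = par₁ x := by
  rw [glue, if_neg (Finset.disjoint_left.1 hdisj hx)]

lemma glue_eq₂ {x : E d} (hx : x ∈ A₂) (hxr : x ≠ r₂) : par x = par₂ x := by
  rw [glue, if_pos hx, if_neg hxr]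

include h₂ in
lemma glue_eq_r₂ : par r₂ = r₁ := by rw [glue, if_pos h₂.1, if_pos rfl]

include h₁ hdisj in
lemma glue_iter₁ : ∀ n : ℕ, ∀ x ∈ A₁, par^[n] x = par₁^[n] x ∧ par₁^[n] x ∈ A₁ := by
  intro n
  induction n with
  | zero => exact fun x hx => ⟨rfl, hx⟩
  | succ n ihn =>
    intro x hx
    obtain ⟨heq, hmem⟩ := ihn x hx
    rw [Function.iterate_succ_apply', Function.iterate_succ_apply', heq,
      glue_eq₁ hdisj hmem]
    exact ⟨rfl, h₁.2.2.1 _ hmem⟩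

include h₁ h₂ hdisj in
lemma glue_iter₂ : ∀ n : ℕ, ∀ y ∈ A₂, par^[n] y ∈ A₂ ∨ par^[n] y = r₁ := by
  intro n
  induction n with
  | zero => exact fun y hy => Or.inl hy
  | succ n ihn =>
    intro y hy
    rw [Function.iterate_succ_apply']
    rcases ihn y hy with hh | hh
    · by_cases hr : par^[n] y = r₂
      · rw [hr, glue_eq_r₂ h₂]; exact Or.inr rfl
      · rw [glue_eq₂ hh hr]; exact Or.inl (h₂.2.2.1 _ hh)
    · rw [hh, glue_eq₁ hdisj h₁.1, h₁.2.1]; exact Or.inr rfl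

include h₂ in
lemma glue_orbit₂_of : ∀ k : ℕ, ∀ y ∈ A₂, ∀ {x : E d}, x ∈ A₂ → par₂^[k] y = x →
    ∃ j, par^[j] y = x := by
  intro k
  induction k with
  | zero => exact fun y _ _ _ h => ⟨0, h⟩
  | succ k ihk =>
    intro y hy x hx hk
    by_cases hyr : y = r₂
    · rw [hyr, Function.iterate_succ_apply, h₂.2.1, Function.iterate_fixed h₂.2.1] at hk
      exact ⟨0, hyr ▸ hk⟩
    · rw [Function.iterate_succ_apply] at hk
      obtain ⟨j, hj⟩ := ihk (par₂ y) (h₂.2.2.1 _ hy) hx hk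
      exact ⟨j + 1, by rw [Function.iterate_succ_apply, glue_eq₂ hy hyr, hj]⟩

include h₁ h₂ hdisj in
lemma glue_orbit₂_to : ∀ k : ℕ, ∀ y ∈ A₂, ∀ {x : E d}, x ∈ A₂ → par^[k] y = x →
    ∃ j, par₂^[j] y = x := by
  intro k
  induction k with
  | zero => exact fun y _ _ _ h => ⟨0, h⟩
  | succ k ihk =>
    intro y hy x hx hk
    by_cases hyr : y = r₂
    · exfalso
      have hfix : par r₁ = r₁ := by rw [glue_eq₁ hdisj h₁.1, h₁.2.1]
      have hstep : par y = r₁ := by rw [hyr, glue_eq_r₂ h₂]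
      rw [Function.iterate_succ_apply, hstep, Function.iterate_fixed hfix] at hk
      exact Finset.disjoint_left.1 hdisj (hk ▸ h₁.1) hx
    · rw [Function.iterate_succ_apply, glue_eq₂ hy hyr] at hk
      obtain ⟨j, hj⟩ := ihk (par₂ y) (h₂.2.2.1 _ hy) hx hk
      exact ⟨j + 1, by rw [Function.iterate_succ_apply, hj]⟩

end Glue

variable {d : ℕ}

section Glue2

variable {A₁ A₂ : Finset (E d)} {par₁ par₂ : E d → E d} {r₁ r₂ : E d}
  (h₁ : IsArbor A₁ par₁ r₁) (h₂ : IsArbor A₂ par₂ r₂) (hdisj : Disjoint A₁ A₂)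

local notation "par" => glue A₂ par₁ par₂ r₁ r₂

include h₁ h₂ hdisj in
lemma glue_isArbor : IsArbor (A₁ ∪ A₂) par r₁ := by
  refine ⟨Finset.mem_union_left _ h₁.1, by rw [glue_eq₁ hdisj h₁.1, h₁.2.1], ?_, ?_⟩
  · intro x hx
    rcases Finset.mem_union.1 hx with hx | hx
    · rw [glue_eq₁ hdisj hx]; exact Finset.mem_union_left _ (h₁.2.2.1 _ hx)
    · by_cases hxr : x = r₂
      · rw [hxr, glue_eq_r₂ h₂]; exact Finset.mem_union_left _ h₁.1
      · rw [glue_eq₂ hx hxr]; exact Finset.mem_union_right _ (h₂.2.2.1 _ hx)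
  · intro x hx
    rcases Finset.mem_union.1 hx with hx | hx
    · obtain ⟨n, hn⟩ := h₁.2.2.2 x hx
      exact ⟨n, (glue_iter₁ h₁ hdisj n x hx).1.trans hn⟩
    · obtain ⟨n, hn⟩ := h₂.2.2.2 x hx
      obtain ⟨j, hj⟩ := glue_orbit₂_of h₂ n x hx h₂.1 hn
      exact ⟨j + 1, by rw [Function.iterate_succ_apply', hj, glue_eq_r₂ h₂]⟩

include h₁ h₂ hdisj in
lemma glue_branch₁ {x : E d} (hx : x ∈ A₁) (hxr : x ≠ r₁) :
    branch (A₁ ∪ A₂) par r₁ x = branch A₁ par₁ r₁ x := by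
  rw [branch, branch, if_neg hxr, if_neg hxr, glue_eq₁ hdisj hx]
  congr 1
  ext y
  simp only [Set.mem_setOf_eq, Finset.mem_union]
  constructor
  · rintro ⟨hy | hy, n, hn⟩
    · exact ⟨hy, n, ((glue_iter₁ h₁ hdisj n y hy).1.symm.trans hn)⟩
    · exfalso
      rcases glue_iter₂ h₁ h₂ hdisj n y hy with hh | hh
      · rw [hn] at hh; exact Finset.disjoint_left.1 hdisj hx hh
      · rw [hn] at hh; exact hxr hh
  · rintro ⟨hy, n, hn⟩
    exact ⟨Or.inl hy, n, (glue_iter₁ h₁ hdisj n y hy).1.trans hn⟩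

include h₁ h₂ hdisj in
lemma glue_branch₂ {x : E d} (hx : x ∈ A₂) (hxr : x ≠ r₂) :
    branch (A₁ ∪ A₂) par r₁ x = branch A₂ par₂ r₂ x := by
  have hxr₁ : x ≠ r₁ := by
    intro h
    rw [h] at hx
    exact Finset.disjoint_left.1 hdisj h₁.1 hx
  rw [branch, branch, if_neg hxr₁, if_neg hxr, glue_eq₂ hx hxr]
  congr 1
  ext y
  simp only [Set.mem_setOf_eq, Finset.mem_union]
  constructor
  · rintro ⟨hy | hy, n, hn⟩
    · exfalso
      have hm := (glue_iter₁ (par₂ := par₂) (r₂ := r₂) h₁ hdisj n y hy).2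
      rw [← (glue_iter₁ (par₂ := par₂) (r₂ := r₂) h₁ hdisj n y hy).1, hn] at hm
      exact Finset.disjoint_left.1 hdisj hm hx
    · obtain ⟨j, hj⟩ := glue_orbit₂_to h₁ h₂ hdisj n y hy hx hn
      exact ⟨hy, j, hj⟩
  · rintro ⟨hy, n, hn⟩
    obtain ⟨j, hj⟩ := glue_orbit₂_of h₂ n y hy hx hn
    exact ⟨Or.inr hy, j, hj⟩

include h₁ h₂ hdisj in
lemma glue_branch_r₂ : branch (A₁ ∪ A₂) par r₁ r₂ = insert r₁ (A₂ : Set (E d)) := by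
  have hr : r₂ ≠ r₁ := by
    intro h
    rw [← h] at h₁
    exact Finset.disjoint_left.1 hdisj h₁.1 h₂.1
  rw [branch, if_neg hr, glue_eq_r₂ h₂]
  congr 1
  ext y
  simp only [Set.mem_setOf_eq, Finset.mem_union, Finset.mem_coe]
  constructor
  · rintro ⟨hy | hy, n, hn⟩
    · exfalso
      have hm := (glue_iter₁ (par₂ := par₂) (r₂ := r₂) h₁ hdisj n y hy).2
      rw [← (glue_iter₁ (par₂ := par₂) (r₂ := r₂) h₁ hdisj n y hy).1, hn] at hm
      exact Finset.disjoint_left.1 hdisj hm h₂.1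
    · exact hy
  · intro hy
    obtain ⟨n, hn⟩ := h₂.2.2.2 y hy
    obtain ⟨j, hj⟩ := glue_orbit₂_of h₂ n y hy h₂.1 hn
    exact ⟨Or.inr hy, j, hj⟩

end Glue2

lemma diam_insert_le {A₁ A₂ : Finset (E d)} {r₁ u v : E d}
    (hr : r₁ ∈ A₁) (hu : u ∈ A₁) (hv : v ∈ A₂) :
    Metric.diam (insert r₁ (A₂ : Set (E d))) ≤
      Metric.diam (A₁ : Set (E d)) + dist u v + Metric.diam (A₂ : Set (E d)) := by
  have hb₁ : Bornology.IsBounded (A₁ : Set (E d)) := A₁.finite_toSet.isBounded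
  have hb₂ : Bornology.IsBounded (A₂ : Set (E d)) := A₂.finite_toSet.isBounded
  have h0 : (0:ℝ) ≤ Metric.diam (A₁ : Set (E d)) + dist u v + Metric.diam (A₂ : Set (E d)) :=
    add_nonneg (add_nonneg Metric.diam_nonneg dist_nonneg) Metric.diam_nonneg
  refine Metric.diam_le_of_forall_dist_le h0 ?_
  intro p hp q hq
  rcases Set.mem_insert_iff.1 hp with hp1 | hp2
  · rcases Set.mem_insert_iff.1 hq with hq1 | hq2
    · rw [hp1, hq1, dist_self]; exact h0
    · rw [hp1]
      calc dist r₁ q ≤ dist r₁ u + dist u v + dist v q := dist_triangle4 _ u v q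
        _ ≤ _ := add_le_add (add_le_add (Metric.dist_le_diam_of_mem hb₁ hr hu) le_rfl)
            (Metric.dist_le_diam_of_mem hb₂ hv hq2)
  · rcases Set.mem_insert_iff.1 hq with hq1 | hq2
    · rw [hq1, dist_comm]
      calc dist r₁ p ≤ dist r₁ u + dist u v + dist v p := dist_triangle4 _ u v p
        _ ≤ _ := add_le_add (add_le_add (Metric.dist_le_diam_of_mem hb₁ hr hu) le_rfl)
            (Metric.dist_le_diam_of_mem hb₂ hv hp2)
    · exact le_trans (Metric.dist_le_diam_of_mem hb₂ hp2 hq2)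
        (le_add_of_nonneg_left (add_nonneg Metric.diam_nonneg dist_nonneg))

variable {d : ℕ}

/-- The constant `C(n) = 3^(n-1) n^(2(n-1))`. -/
def Cnat (n : ℕ) : ℕ := 3 ^ (n - 1) * n ^ (2 * (n - 1))

lemma Cnat_pos (n : ℕ) : 0 < Cnat n := by
  unfold Cnat
  rcases Nat.eq_zero_or_pos n with rfl | h
  · norm_num
  · positivity

lemma Cnat_merge {n₁ n₂ : ℕ} (h₁ : 1 ≤ n₁) (h₂ : 1 ≤ n₂) :
    Cnat n₁ * Cnat n₂ * (n₁ + n₂) ≤ Cnat (n₁ + n₂) := by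
  set n := n₁ + n₂ with hn
  calc Cnat n₁ * Cnat n₂ * n
      = (3 ^ (n₁-1) * 3 ^ (n₂-1)) * (n₁ ^ (2*(n₁-1)) * (n₂ ^ (2*(n₂-1)) * n)) := by
        unfold Cnat; ring
    _ ≤ (3 ^ (n-1)) * (n ^ (2*(n₁-1)) * (n ^ (2*(n₂-1)) * n ^ 1)) := by
        apply Nat.mul_le_mul
        · rw [← pow_add]
          exact Nat.pow_le_pow_right (by norm_num) (by omega)
        · apply Nat.mul_le_mul
          · exact Nat.pow_le_pow_left (by omega) _
          · apply Nat.mul_le_mul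
            · exact Nat.pow_le_pow_left (by omega) _
            · rw [pow_one]
    _ = 3 ^ (n-1) * n ^ (2*(n₁-1) + (2*(n₂-1) + 1)) := by rw [← pow_add, ← pow_add]
    _ ≤ 3 ^ (n-1) * n ^ (2*(n-1)) := by
        refine Nat.mul_le_mul le_rfl (Nat.pow_le_pow_right (by omega) (by omega))
    _ = Cnat n := rfl

/-- Main induction for the upper bound. -/
lemma sweep_upper_aux : ∀ N : ℕ, ∀ A : Finset (E d), ∀ T : Finset (Sym2 (E d)),
    A.card ≤ N → A.Nonempty → IsSpanTree A T →
    ∃ par root, IsArbor A par root ∧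
      ∏ x ∈ A.erase root, Metric.diam (branch A par root x) ≤
        (Cnat A.card : ℝ) * ∏ e ∈ T, edgeLen e := by
  intro N
  induction N with
  | zero =>
    intro A T h hne _
    exact absurd (Finset.card_pos.2 hne) (by omega)
  | succ N ih =>
    intro A T hAN hne hT
    by_cases hA1 : A.card = 1
    · obtain ⟨a, rfl⟩ := Finset.card_eq_one.1 hA1
      obtain ⟨par, root, harb⟩ := exists_arbor hne
      have hroot : root = a := by simpa using harb.1
      have hTcard := hT.2.2.1
      have hTempty : T = ∅ := Finset.card_eq_zero.1 (by omega)
      refine ⟨par, root, harb, ?_⟩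
      rw [hroot]
      simp [hTempty, Cnat]
    · have hA2 : 2 ≤ A.card := by
        have := Finset.card_pos.2 hne; omega
      have hTne : T.Nonempty := Finset.card_pos.1 (by have := hT.2.2.1; omega)
      obtain ⟨e₀, he₀, hmax⟩ := T.exists_max_image edgeLen hTne
      obtain ⟨u, v, he⟩ : ∃ u v, e₀ = s(u, v) := ⟨e₀.out.1, e₀.out.2, e₀.out_eq.symm⟩
      subst he
      obtain ⟨A₁, A₂, T₁, T₂, hu1, hv2, hdisjA, hAeq, hdT, hnotin, hTeq, hT1, hT2⟩ :=
        spanTree_split hT he₀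
      subst hAeq
      have hvnot : v ∉ A₁ := Finset.disjoint_right.1 hdisjA hv2
      have hunot : u ∉ A₂ := Finset.disjoint_left.1 hdisjA hu1
      have hlt₁ : A₁.card < (A₁ ∪ A₂).card :=
        Finset.card_lt_card ((Finset.ssubset_iff_of_subset Finset.subset_union_left).2
          ⟨v, Finset.mem_union_right _ hv2, hvnot⟩)
      have hlt₂ : A₂.card < (A₁ ∪ A₂).card :=
        Finset.card_lt_card ((Finset.ssubset_iff_of_subset Finset.subset_union_right).2
          ⟨u, Finset.mem_union_left _ hu1, hunot⟩)
      obtain ⟨par₁, r₁, harb₁, hp₁⟩ := ih A₁ T₁ (by omega) ⟨u, hu1⟩ hT1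
      obtain ⟨par₂, r₂, harb₂, hp₂⟩ := ih A₂ T₂ (by omega) ⟨v, hv2⟩ hT2
      refine ⟨glue A₂ par₁ par₂ r₁ r₂, r₁, glue_isArbor harb₁ harb₂ hdisjA, ?_⟩
      have herase : (A₁ ∪ A₂).erase r₁ = (A₁.erase r₁) ∪ A₂ := by
        ext x
        simp only [Finset.mem_erase, Finset.mem_union]
        constructor
        · rintro ⟨hx, h | h⟩
          · exact Or.inl ⟨hx, h⟩
          · exact Or.inr h
        · rintro (⟨hx, h⟩ | h)
          · exact ⟨hx, Or.inl h⟩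
          · refine ⟨fun he' => ?_, Or.inr h⟩
            rw [he'] at h
            exact Finset.disjoint_left.1 hdisjA harb₁.1 h
      rw [herase, Finset.prod_union (hdisjA.mono_left (Finset.erase_subset _ _)),
        ← Finset.mul_prod_erase A₂ _ harb₂.1]
      have hB1 : ∀ x ∈ A₁.erase r₁,
          Metric.diam (branch (A₁ ∪ A₂) (glue A₂ par₁ par₂ r₁ r₂) r₁ x) =
          Metric.diam (branch A₁ par₁ r₁ x) := by
        intro x hx
        rw [glue_branch₁ harb₁ harb₂ hdisjA (Finset.mem_erase.1 hx).2
          (Finset.mem_erase.1 hx).1]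
      have hB2 : ∀ x ∈ A₂.erase r₂,
          Metric.diam (branch (A₁ ∪ A₂) (glue A₂ par₁ par₂ r₁ r₂) r₁ x) =
          Metric.diam (branch A₂ par₂ r₂ x) := by
        intro x hx
        rw [glue_branch₂ harb₁ harb₂ hdisjA (Finset.mem_erase.1 hx).2
          (Finset.mem_erase.1 hx).1]
      have hBr : Metric.diam (branch (A₁ ∪ A₂) (glue A₂ par₁ par₂ r₁ r₂) r₁ r₂) =
          Metric.diam (insert r₁ (A₂ : Set (E d))) := by
        rw [glue_branch_r₂ harb₁ harb₂ hdisjA]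
      rw [Finset.prod_congr rfl hB1, Finset.prod_congr rfl hB2, hBr]
      -- notation
      set L : ℝ := edgeLen s(u, v) with hL
      have hLnn : 0 ≤ L := edgeLen_nonneg _
      have hsubT₁ : T₁ ⊆ T := by
        rw [← hTeq]; exact Finset.Subset.trans Finset.subset_union_left
          (Finset.subset_insert _ _)
      have hsubT₂ : T₂ ⊆ T := by
        rw [← hTeq]; exact Finset.Subset.trans Finset.subset_union_right
          (Finset.subset_insert _ _)
      have hsum₁ : ∑ e ∈ T₁, edgeLen e ≤ (T₁.card : ℝ) * L := by
        have := Finset.sum_le_card_nsmul T₁ edgeLen L (fun e he' => hmax e (hsubT₁ he'))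
        simpa [nsmul_eq_mul] using this
      have hsum₂ : ∑ e ∈ T₂, edgeLen e ≤ (T₂.card : ℝ) * L := by
        have := Finset.sum_le_card_nsmul T₂ edgeLen L (fun e he' => hmax e (hsubT₂ he'))
        simpa [nsmul_eq_mul] using this
      have hnn : (A₁ ∪ A₂).card = A₁.card + A₂.card := Finset.card_union_of_disjoint hdisjA
      have hcoef : (T₁.card : ℝ) + 1 + T₂.card ≤ ((A₁ ∪ A₂).card : ℝ) := by
        have h1 := hT1.2.2.1
        have h2 := hT2.2.2.1
        have : T₁.card + 1 + T₂.card ≤ (A₁ ∪ A₂).card := by omega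
        exact_mod_cast this
      have hM : Metric.diam (insert r₁ (A₂ : Set (E d))) ≤ ((A₁ ∪ A₂).card : ℝ) * L := by
        calc Metric.diam (insert r₁ (A₂ : Set (E d)))
            ≤ Metric.diam (A₁ : Set (E d)) + dist u v + Metric.diam (A₂ : Set (E d)) :=
              diam_insert_le harb₁.1 hu1 hv2
          _ ≤ (T₁.card : ℝ) * L + L + (T₂.card : ℝ) * L := by
              refine add_le_add (add_le_add ?_ ?_) ?_
              · exact le_trans (diam_le_sum_edges hT1) hsum₁
              · exact le_of_eq (edgeLen_mk u v).symm
              · exact le_trans (diam_le_sum_edges hT2) hsum₂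
          _ = ((T₁.card : ℝ) + 1 + T₂.card) * L := by ring
          _ ≤ ((A₁ ∪ A₂).card : ℝ) * L := mul_le_mul_of_nonneg_right hcoef hLnn
      -- nonnegativity facts
      have hP₁ : (0:ℝ) ≤ ∏ x ∈ A₁.erase r₁, Metric.diam (branch A₁ par₁ r₁ x) :=
        Finset.prod_nonneg fun x _ => Metric.diam_nonneg
      have hP₂ : (0:ℝ) ≤ ∏ x ∈ A₂.erase r₂, Metric.diam (branch A₂ par₂ r₂ x) :=
        Finset.prod_nonneg fun x _ => Metric.diam_nonneg
      have hQ₁ : (0:ℝ) ≤ ∏ e ∈ T₁, edgeLen e :=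
        Finset.prod_nonneg fun e _ => edgeLen_nonneg e
      have hQ₂ : (0:ℝ) ≤ ∏ e ∈ T₂, edgeLen e :=
        Finset.prod_nonneg fun e _ => edgeLen_nonneg e
      have hC₁ : (0:ℝ) ≤ (Cnat A₁.card : ℝ) := Nat.cast_nonneg _
      have hC₂ : (0:ℝ) ≤ (Cnat A₂.card : ℝ) := Nat.cast_nonneg _
      have hTprod : ∏ e ∈ T, edgeLen e = L * ((∏ e ∈ T₁, edgeLen e) * ∏ e ∈ T₂, edgeLen e) := by
        rw [← hTeq, Finset.prod_insert hnotin, Finset.prod_union hdT]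
      have hCmerge : (Cnat A₁.card : ℝ) * (Cnat A₂.card) * ((A₁ ∪ A₂).card : ℝ) ≤
          (Cnat (A₁ ∪ A₂).card : ℝ) := by
        rw [hnn]
        have h1 : 1 ≤ A₁.card := Finset.card_pos.2 ⟨u, hu1⟩
        have h2 : 1 ≤ A₂.card := Finset.card_pos.2 ⟨v, hv2⟩
        exact_mod_cast Cnat_merge h1 h2
      calc (∏ x ∈ A₁.erase r₁, Metric.diam (branch A₁ par₁ r₁ x)) *
            (Metric.diam (insert r₁ (A₂ : Set (E d))) *
              ∏ x ∈ A₂.erase r₂, Metric.diam (branch A₂ par₂ r₂ x))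
          ≤ ((Cnat A₁.card : ℝ) * ∏ e ∈ T₁, edgeLen e) *
            ((((A₁ ∪ A₂).card : ℝ) * L) *
              ((Cnat A₂.card : ℝ) * ∏ e ∈ T₂, edgeLen e)) := by
            refine mul_le_mul hp₁ ?_ (mul_nonneg Metric.diam_nonneg hP₂)
              (mul_nonneg hC₁ hQ₁)
            refine mul_le_mul hM hp₂ hP₂ (mul_nonneg (Nat.cast_nonneg _) hLnn)
        _ = ((Cnat A₁.card : ℝ) * (Cnat A₂.card) * ((A₁ ∪ A₂).card : ℝ)) *
            (L * ((∏ e ∈ T₁, edgeLen e) * ∏ e ∈ T₂, edgeLen e)) := by ring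
        _ ≤ (Cnat (A₁ ∪ A₂).card : ℝ) *
            (L * ((∏ e ∈ T₁, edgeLen e) * ∏ e ∈ T₂, edgeLen e)) := by
            refine mul_le_mul_of_nonneg_right hCmerge ?_
            exact mul_nonneg hLnn (mul_nonneg hQ₁ hQ₂)
        _ = (Cnat (A₁ ∪ A₂).card : ℝ) * ∏ e ∈ T, edgeLen e := by rw [hTprod]

/-- The upper bound against a specific spanning tree. -/
lemma sweep_le_tree {A : Finset (E d)} {T : Finset (Sym2 (E d))}
    (hne : A.Nonempty) (hT : IsSpanTree A T) :
    sweep A ≤ (Cnat A.card : ℝ) * Metric.diam (A : Set (E d)) * ∏ e ∈ T, edgeLen e := by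
  obtain ⟨par, root, harb, hbound⟩ := sweep_upper_aux A.card A T le_rfl hne hT
  refine le_trans (sweep_le harb) ?_
  rw [← Finset.mul_prod_erase A _ harb.1, branch_root]
  calc Metric.diam (A : Set (E d)) *
        ∏ x ∈ A.erase root, Metric.diam (branch A par root x)
      ≤ Metric.diam (A : Set (E d)) * ((Cnat A.card : ℝ) * ∏ e ∈ T, edgeLen e) :=
        mul_le_mul_of_nonneg_left hbound Metric.diam_nonneg
    _ = (Cnat A.card : ℝ) * Metric.diam (A : Set (E d)) * ∏ e ∈ T, edgeLen e := by ring

/-- For every finite `A ⊆ ℝ^d` with `|A| ≥ 2`,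
`sweep(A) ≍_{|A|} diam(A) · spread(A)`, with constants depending only on `n = |A|`
(not on `A` or `d`). -/
theorem statement14 :
    ∀ n : ℕ, 2 ≤ n → ∃ c C : ℝ, 0 < c ∧ 0 < C ∧
      ∀ d : ℕ, ∀ A : Finset (E d), A.card = n →
        c * (Metric.diam (A : Set (E d)) * spread A) ≤ sweep A ∧
          sweep A ≤ C * (Metric.diam (A : Set (E d)) * spread A) := by
  intro n hn
  refine ⟨1, (Cnat n : ℝ), one_pos, by exact_mod_cast Cnat_pos n, ?_⟩
  intro d A hcard
  have hne : A.Nonempty := Finset.card_pos.1 (by omega)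
  obtain ⟨x, hx, y, hy, hxy⟩ := Finset.one_lt_card.1 (show 1 < A.card by omega)
  have hbdd : Bornology.IsBounded (A : Set (E d)) := A.finite_toSet.isBounded
  have hdiam : 0 < Metric.diam (A : Set (E d)) :=
    lt_of_lt_of_le (dist_pos.2 hxy)
      (Metric.dist_le_diam_of_mem hbdd (Finset.mem_coe.2 hx) (Finset.mem_coe.2 hy))
  constructor
  · rw [one_mul]
    exact diam_mul_spread_le_sweep hne
  · have hD : (0:ℝ) < (Cnat n : ℝ) * Metric.diam (A : Set (E d)) :=
      mul_pos (by exact_mod_cast Cnat_pos n) hdiam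
    have hSne : {t : ℝ | ∃ T : Finset (Sym2 (E d)), IsSpanTree A T ∧
        t = ∏ e ∈ T, edgeLen e}.Nonempty := by
      obtain ⟨par, root, harb⟩ := exists_arbor hne
      exact ⟨_, arborEdges A par root, arbor_spanTree harb, rfl⟩
    have hkey : sweep A / ((Cnat n : ℝ) * Metric.diam (A : Set (E d))) ≤ spread A := by
      refine le_csInf hSne ?_
      rintro t ⟨T, hT, rfl⟩
      rw [div_le_iff₀ hD]
      calc sweep A ≤ (Cnat A.card : ℝ) * Metric.diam (A : Set (E d)) *
            ∏ e ∈ T, edgeLen e := sweep_le_tree hne hT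
        _ = (∏ e ∈ T, edgeLen e) * ((Cnat n : ℝ) * Metric.diam (A : Set (E d))) := by
            rw [hcard]; ring
    rw [div_le_iff₀ hD] at hkey
    calc sweep A ≤ spread A * ((Cnat n : ℝ) * Metric.diam (A : Set (E d))) := hkey
      _ = (Cnat n : ℝ) * (Metric.diam (A : Set (E d)) * spread A) := by ring

end LRP
end
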